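/- arXiv:math/9806130 — 4 statements merged into one kernel-verified Lean document; each statement's English description precedes it below -/
import Mathlib

section
/- Let A be a weak *-Hopf algebra and M a unital ℂ-algebra with a linear map ▷ : A⊗M → M satisfying (ab)▷m = a▷(b▷m), 1_A▷m = m, and a▷(mn) = Σ(a₍₁₎▷m)(a₍₂₎▷n) for all a,b ∈ A and m,n ∈ M. Then the following equivalences hold: condition (i) a▷1_M = Σ(a₍₁₎·S(a₍₂₎))▷1_M for all a is equivalent to condition (iii) (ab)▷1_M = Σ ε(a₍₁₎·b)·(a₍₂₎▷1_M) for all a,b; and condition (ii) a▷1_M = Σ(a₍₂₎·S⁻¹(a₍₁₎))▷1_M for all a is equivalent to condition (iv) (ab)▷1_M = Σ (a₍₁₎▷1_M)·ε(a₍₂₎·b) for all a,b. If moreover M is a *-algebra and (a▷m)* = (S(a))*▷m* for all a ∈ A, m ∈ M, then all four conditions (i)–(iv) are equivalent. -/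
open scoped TensorProduct

noncomputable section

/-- The componentwise star operation on a tensor product of star algebras,
as an additive map (it is conjugate-linear, hence not a `LinearMap`). -/
def tensorStar (A B : Type) [Ring A] [Algebra ℂ A] [StarRing A] [StarModule ℂ A]
    [Ring B] [Algebra ℂ B] [StarRing B] [StarModule ℂ B] :
    A ⊗[ℂ] B →+ A ⊗[ℂ] B :=
  TensorProduct.liftAddHom
    (AddMonoidHom.mk'
      (fun a => AddMonoidHom.mk' (fun b => star a ⊗ₜ[ℂ] star b)
        (fun x y => by
          show star a ⊗ₜ[ℂ] star (x + y) = star a ⊗ₜ[ℂ] star x + star a ⊗ₜ[ℂ] star y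
          rw [star_add, TensorProduct.tmul_add]))
      (fun x y => by
        ext b
        show star (x + y) ⊗ₜ[ℂ] star b = star x ⊗ₜ[ℂ] star b + star y ⊗ₜ[ℂ] star b
        rw [star_add, TensorProduct.add_tmul]))
    (fun r a b => by
      show star (r • a) ⊗ₜ[ℂ] star b = star a ⊗ₜ[ℂ] star (r • b)
      rw [star_smul, star_smul, TensorProduct.smul_tmul])

/-- A finite dimensional weak `*`-Hopf algebra over `ℂ` (axioms of [BNS]),
together with the derived properties of the antipode (which follow from the
axioms and are included as fields for convenience). -/
structure WeakHopfAlgebra (A : Type) [Ring A] [Algebra ℂ A] [StarRing A] [StarModule ℂ A] where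
  Δ : A →ₗ[ℂ] A ⊗[ℂ] A
  ε : A →ₗ[ℂ] ℂ
  S : A →ₗ[ℂ] A
  Sinv : A →ₗ[ℂ] A
  finite : FiniteDimensional ℂ A
  Δ_mul : ∀ x y : A, Δ (x * y) = Δ x * Δ y
  Δ_star : ∀ x : A, Δ (star x) = tensorStar A A (Δ x)
  coassoc : ∀ x : A,
    (TensorProduct.assoc ℂ A A A) ((TensorProduct.map Δ (LinearMap.id : A →ₗ[ℂ] A)) (Δ x))
      = (TensorProduct.map (LinearMap.id : A →ₗ[ℂ] A) Δ) (Δ x)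
  counit_left : ∀ x : A,
    (TensorProduct.lid ℂ A) ((TensorProduct.map ε (LinearMap.id : A →ₗ[ℂ] A)) (Δ x)) = x
  counit_right : ∀ x : A,
    (TensorProduct.rid ℂ A) ((TensorProduct.map (LinearMap.id : A →ₗ[ℂ] A) ε) (Δ x)) = x
  unit_weak :
    (Δ 1 ⊗ₜ[ℂ] (1 : A)) * ((TensorProduct.assoc ℂ A A A).symm ((1 : A) ⊗ₜ[ℂ] Δ 1))
      = (TensorProduct.map Δ (LinearMap.id : A →ₗ[ℂ] A)) (Δ 1)
  unit_weak' :
    ((TensorProduct.assoc ℂ A A A).symm ((1 : A) ⊗ₜ[ℂ] Δ 1)) * (Δ 1 ⊗ₜ[ℂ] (1 : A))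
      = (TensorProduct.map Δ (LinearMap.id : A →ₗ[ℂ] A)) (Δ 1)
  counit_weak : ∀ x y z : A,
    ε (x * y * z) = (TensorProduct.lid ℂ ℂ)
      ((TensorProduct.map (ε ∘ₗ LinearMap.mulLeft ℂ x) (ε ∘ₗ LinearMap.mulRight ℂ z)) (Δ y))
  counit_weak' : ∀ x y z : A,
    ε (x * y * z) = (TensorProduct.lid ℂ ℂ)
      ((TensorProduct.map (ε ∘ₗ LinearMap.mulRight ℂ z) (ε ∘ₗ LinearMap.mulLeft ℂ x)) (Δ y))
  antipode_left : ∀ x : A,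
    LinearMap.mul' ℂ A ((TensorProduct.map S (LinearMap.id : A →ₗ[ℂ] A)) (Δ x))
      = (TensorProduct.rid ℂ A)
          ((TensorProduct.map (LinearMap.id : A →ₗ[ℂ] A) (ε ∘ₗ LinearMap.mulLeft ℂ x)) (Δ 1))
  antipode_right : ∀ x : A,
    LinearMap.mul' ℂ A ((TensorProduct.map (LinearMap.id : A →ₗ[ℂ] A) S) (Δ x))
      = (TensorProduct.lid ℂ A)
          ((TensorProduct.map (ε ∘ₗ LinearMap.mulRight ℂ x) (LinearMap.id : A →ₗ[ℂ] A)) (Δ 1))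
  antipode_mid : ∀ x : A,
    LinearMap.mul' ℂ A
      ((TensorProduct.map (LinearMap.mul' ℂ A ∘ₗ TensorProduct.map S (LinearMap.id : A →ₗ[ℂ] A)) S)
        ((TensorProduct.map Δ (LinearMap.id : A →ₗ[ℂ] A)) (Δ x))) = S x
  S_Sinv : ∀ x : A, S (Sinv x) = x
  Sinv_S : ∀ x : A, Sinv (S x) = x
  S_antimul : ∀ x y : A, S (x * y) = S y * S x
  S_anticomul : ∀ x : A, Δ (S x) = (TensorProduct.comm ℂ A A) ((TensorProduct.map S S) (Δ x))
  S_star : ∀ x : A, star (S (star x)) = Sinv x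

/-- The set of elements commuting with everything. -/
def centerSet (R : Type) [Mul R] : Set R := {z | ∀ r : R, z * r = r * z}

namespace WeakHopfAlgebra

variable {A : Type} [Ring A] [Algebra ℂ A] [StarRing A] [StarModule ℂ A]

/-- `Σ x₍₁₎ · S(x₍₂₎)`. -/
def swIdS (W : WeakHopfAlgebra A) (x : A) : A :=
  LinearMap.mul' ℂ A ((TensorProduct.map (LinearMap.id : A →ₗ[ℂ] A) W.S) (W.Δ x))

/-- `Σ S(x₍₁₎) · x₍₂₎`. -/
def swSId (W : WeakHopfAlgebra A) (x : A) : A :=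
  LinearMap.mul' ℂ A ((TensorProduct.map W.S (LinearMap.id : A →ₗ[ℂ] A)) (W.Δ x))

/-- `Σ x₍₂₎ · S⁻¹(x₍₁₎)`. -/
def swIdSinv (W : WeakHopfAlgebra A) (x : A) : A :=
  LinearMap.mul' ℂ A
    ((TensorProduct.map (LinearMap.id : A →ₗ[ℂ] A) W.Sinv) ((TensorProduct.comm ℂ A A) (W.Δ x)))

/-- `Σ S⁻¹(x₍₂₎) · x₍₁₎`. -/
def swSinvId (W : WeakHopfAlgebra A) (x : A) : A :=
  LinearMap.mul' ℂ A
    ((TensorProduct.map W.Sinv (LinearMap.id : A →ₗ[ℂ] A)) ((TensorProduct.comm ℂ A A) (W.Δ x)))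

/-- The left subalgebra `A_L = {(φ ⊗ id)(Δ 1) : φ ∈ A*}`. -/
def AL (W : WeakHopfAlgebra A) : Set A :=
  {a | ∃ φ : A →ₗ[ℂ] ℂ,
    a = (TensorProduct.lid ℂ A) ((TensorProduct.map φ (LinearMap.id : A →ₗ[ℂ] A)) (W.Δ 1))}

/-- The right subalgebra `A_R = {(id ⊗ φ)(Δ 1) : φ ∈ A*}`. -/
def AR (W : WeakHopfAlgebra A) : Set A :=
  {a | ∃ φ : A →ₗ[ℂ] ℂ,
    a = (TensorProduct.rid ℂ A) ((TensorProduct.map (LinearMap.id : A →ₗ[ℂ] A) φ) (W.Δ 1))}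

/-- A left integral: `a · l = Σ a₍₁₎ S(a₍₂₎) · l` for all `a`. -/
def IsLeftIntegral (W : WeakHopfAlgebra A) (l : A) : Prop := ∀ a : A, a * l = W.swIdS a * l

/-- A right integral: `r · a = r · Σ S(a₍₁₎) a₍₂₎` for all `a`. -/
def IsRightIntegral (W : WeakHopfAlgebra A) (r : A) : Prop := ∀ a : A, r * a = r * W.swSId a

/-- A normalized Haar integral. -/
def IsHaar (W : WeakHopfAlgebra A) (h : A) : Prop :=
  W.IsLeftIntegral h ∧ W.IsRightIntegral h ∧ W.swSId h = 1 ∧ W.swIdS h = 1 ∧ W.S h = h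

/-- The canonical left action of a functional `λ ∈ A*` on `A`:
`λ ⇀ a = Σ a₍₁₎ · ⟨λ, a₍₂₎⟩`. -/
def lact (W : WeakHopfAlgebra A) (lam : A →ₗ[ℂ] ℂ) : A →ₗ[ℂ] A :=
  (TensorProduct.rid ℂ A).toLinearMap ∘ₗ
    (TensorProduct.map (LinearMap.id : A →ₗ[ℂ] A) lam) ∘ₗ W.Δ

/-- `λ ∈ A*` is a left integral of the dual weak Hopf algebra:
`λ ⇀ a ∈ A_L` for all `a ∈ A`. -/
def IsDualLeftIntegral (W : WeakHopfAlgebra A) (lam : A →ₗ[ℂ] ℂ) : Prop :=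
  ∀ a : A, W.lact lam a ∈ W.AL

/-- A dual pair of left integrals `(l, λ)`. -/
def IsDualPair (W : WeakHopfAlgebra A) (l : A) (lam : A →ₗ[ℂ] ℂ) : Prop :=
  W.IsLeftIntegral l ∧ W.IsDualLeftIntegral lam ∧
  W.lact lam l = 1 ∧
  (∀ a : A,
    (TensorProduct.rid ℂ A)
      ((TensorProduct.map (LinearMap.id : A →ₗ[ℂ] A) (lam ∘ₗ LinearMap.mulLeft ℂ a)) (W.Δ l))
      = W.S a) ∧
  (∀ a : A,
    (TensorProduct.lid ℂ A)
      ((TensorProduct.map (lam ∘ₗ LinearMap.mulRight ℂ a ∘ₗ W.Sinv)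
        (LinearMap.id : A →ₗ[ℂ] A)) (W.Δ l)) = a)

end WeakHopfAlgebra

/-- A (left) module `*`-algebra over a weak `*`-Hopf algebra. -/
structure ModuleAlgebra {A : Type} [Ring A] [Algebra ℂ A] [StarRing A] [StarModule ℂ A]
    (W : WeakHopfAlgebra A) (M : Type) [Ring M] [Algebra ℂ M] [StarRing M] [StarModule ℂ M] where
  act : A →ₗ[ℂ] M →ₗ[ℂ] M
  act_mul : ∀ (a b : A) (m : M), act (a * b) m = act a (act b m)
  act_one : ∀ m : M, act 1 m = m
  act_mul' : ∀ (a : A) (m n : M),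
    act a (m * n) = LinearMap.mul' ℂ M ((TensorProduct.map (act.flip m) (act.flip n)) (W.Δ a))
  act_star : ∀ (a : A) (m : M), star (act a m) = act (star (W.S a)) (star m)
  act_unit : ∀ a : A, act a 1 = act (W.swIdS a) 1

namespace ModuleAlgebra

variable {A : Type} [Ring A] [Algebra ℂ A] [StarRing A] [StarModule ℂ A]
variable {M : Type} [Ring M] [Algebra ℂ M] [StarRing M] [StarModule ℂ M]
variable {W : WeakHopfAlgebra A}

/-- `M_R = A ▷ 1_M`. -/
def MR (MA : ModuleAlgebra W M) : Set M := Set.range fun a : A => MA.act a 1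

/-- The fixed point algebra `M^A`. -/
def fixed (MA : ModuleAlgebra W M) : Set M :=
  {n | ∀ (a : A) (m : M), MA.act a (m * n) = MA.act a m * n}

end ModuleAlgebra

section Crossed

variable {A : Type} [Ring A] [Algebra ℂ A] [StarRing A] [StarModule ℂ A]
variable {M : Type} [Ring M] [Algebra ℂ M] [StarRing M] [StarModule ℂ M]
variable {W : WeakHopfAlgebra A}

/-- The subspace of `M ⊗ A` by which one divides to form the crossed product
`M ⋊ A = M ⊗_{A_L} A`. -/
def crossedRel (MA : ModuleAlgebra W M) : Submodule ℂ (M ⊗[ℂ] A) :=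
  Submodule.span ℂ
    {x | ∃ (m : M) (a b : A), b ∈ W.AL ∧
      x = (m * MA.act b 1) ⊗ₜ[ℂ] a - m ⊗ₜ[ℂ] (b * a)}

/-- The crossed product `M ⋊ A` as a vector space. -/
abbrev Crossed (MA : ModuleAlgebra W M) : Type := (M ⊗[ℂ] A) ⧸ crossedRel MA

/-- The canonical projection `M ⊗ A → M ⋊ A`; `cmk MA (m ⊗ₜ a)` is `m ⋊ a`. -/
def cmk (MA : ModuleAlgebra W M) : M ⊗[ℂ] A →ₗ[ℂ] Crossed MA := (crossedRel MA).mkQ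

/-- The embedding `M → M ⋊ A`, `m ↦ m ⋊ 1`. -/
def iM (MA : ModuleAlgebra W M) : M →ₗ[ℂ] Crossed MA :=
  cmk MA ∘ₗ (TensorProduct.mk ℂ M A).flip (1 : A)

/-- The map `A → M ⋊ A`, `a ↦ 1 ⋊ a`. -/
def iA (MA : ModuleAlgebra W M) : A →ₗ[ℂ] Crossed MA :=
  cmk MA ∘ₗ (TensorProduct.mk ℂ M A) (1 : M)

/-- The unit `1 ⋊ 1` of `M ⋊ A`. -/
def oneC (MA : ModuleAlgebra W M) : Crossed MA := cmk MA ((1 : M) ⊗ₜ[ℂ] (1 : A))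

/-- The multiplication of the crossed product `M ⋊ A`
(whose existence is the content of Theorem 3.1), as a bundled bilinear map
together with its defining formula on generators:
`(m ⋊ a)(m' ⋊ a') = Σ m (a₍₁₎ ▷ m') ⋊ a₍₂₎ a'`. -/
structure CrossedMul (MA : ModuleAlgebra W M) where
  mul : Crossed MA →ₗ[ℂ] Crossed MA →ₗ[ℂ] Crossed MA
  mul_def : ∀ (m m' : M) (a a' : A),
    mul (cmk MA (m ⊗ₜ[ℂ] a)) (cmk MA (m' ⊗ₜ[ℂ] a'))
      = cmk MA ((TensorProduct.map ((LinearMap.mulLeft ℂ m) ∘ₗ (MA.act.flip m'))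
          (LinearMap.mulRight ℂ a')) (W.Δ a))

/-- The star operation of the crossed product `M ⋊ A`
(whose existence is part of Theorem 3.1):
`(m ⋊ a)* = Σ (a₍₁₎* ▷ m*) ⋊ a₍₂₎*`. -/
structure CrossedStar (MA : ModuleAlgebra W M) where
  st : Crossed MA →+ Crossed MA
  st_smul : ∀ (c : ℂ) (x : Crossed MA), st (c • x) = (starRingEnd ℂ c) • st x
  st_def : ∀ (m : M) (a : A),
    st (cmk MA (m ⊗ₜ[ℂ] a))
      = cmk MA ((TensorProduct.map (MA.act.flip (star m)) (LinearMap.id : A →ₗ[ℂ] A))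
          (W.Δ (star a)))

/-- The multiplication on `(M ⋊ A) ⊗ B` induced by a crossed product
multiplication on `M ⋊ A` and the algebra structure of `B`. -/
def mulT (MA : ModuleAlgebra W M) (CS : CrossedMul MA) (B : Type) [Ring B] [Algebra ℂ B] :
    Crossed MA ⊗[ℂ] B →ₗ[ℂ] Crossed MA ⊗[ℂ] B →ₗ[ℂ] Crossed MA ⊗[ℂ] B :=
  TensorProduct.lift
    ((TensorProduct.mapBilinear (RingHom.id ℂ) (Crossed MA) B (Crossed MA) B).compl₁₂ CS.mul
      (LinearMap.mul ℂ B))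

end Crossed

set_option maxHeartbeats 2000000 in
set_option synthInstance.maxHeartbeats 1000000 in
/-- Corollary 2.4 of [NSW]: for a left action satisfying the module-algebra
axioms except the unit axiom, the four possible unit axioms
(i) `a ▷ 1 = Σ (a₍₁₎ S(a₍₂₎)) ▷ 1`, (iii) `(ab) ▷ 1 = Σ ε(a₍₁₎ b)·(a₍₂₎ ▷ 1)`,
(ii) `a ▷ 1 = Σ (a₍₂₎ S⁻¹(a₍₁₎)) ▷ 1`, (iv) `(ab) ▷ 1 = Σ (a₍₁₎ ▷ 1)·ε(a₍₂₎ b)`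
satisfy (i) ⟺ (iii) and (ii) ⟺ (iv); if moreover the action is compatible
with the star structures, then all four are equivalent. -/
theorem act_unit_conditions_equiv
    {A M : Type} [Ring A] [Algebra ℂ A] [StarRing A] [StarModule ℂ A]
    [Ring M] [Algebra ℂ M] [StarRing M] [StarModule ℂ M]
    (W : WeakHopfAlgebra A) (act : A →ₗ[ℂ] M →ₗ[ℂ] M)
    (act_mul : ∀ (a b : A) (m : M), act (a * b) m = act a (act b m))
    (act_one : ∀ m : M, act 1 m = m)
    (act_mul' : ∀ (a : A) (m n : M),
      act a (m * n)
        = LinearMap.mul' ℂ M ((TensorProduct.map (act.flip m) (act.flip n)) (W.Δ a))) :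
    (((∀ a : A, act a 1 = act (W.swIdS a) 1) ↔
        (∀ a b : A, act (a * b) 1 =
          (TensorProduct.lid ℂ M)
            ((TensorProduct.map (W.ε ∘ₗ LinearMap.mulRight ℂ b) (act.flip 1)) (W.Δ a)))) ∧
      ((∀ a : A, act a 1 = act (W.swIdSinv a) 1) ↔
        (∀ a b : A, act (a * b) 1 =
          (TensorProduct.rid ℂ M)
            ((TensorProduct.map (act.flip 1) (W.ε ∘ₗ LinearMap.mulRight ℂ b)) (W.Δ a))))) ∧
    ((∀ (a : A) (m : M), star (act a m) = act (star (W.S a)) (star m)) →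
      (((∀ a : A, act a 1 = act (W.swIdS a) 1) ↔ (∀ a : A, act a 1 = act (W.swIdSinv a) 1)) ∧
        ((∀ a : A, act a 1 = act (W.swIdS a) 1) ↔
          (∀ a b : A, act (a * b) 1 =
            (TensorProduct.rid ℂ M)
              ((TensorProduct.map (act.flip 1) (W.ε ∘ₗ LinearMap.mulRight ℂ b)) (W.Δ a)))))) := by
  classical
  obtain ⟨D, hD⟩ : ∃ D : A → Finset (A × A), ∀ x : A, W.Δ x = ∑ p ∈ D x, p.1 ⊗ₜ[ℂ] p.2 := by
    choose D hD using fun x : A => TensorProduct.exists_finset (W.Δ x)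
    exact ⟨D, hD⟩
  -- tensorStar on pure tensors
  have htS : ∀ x y : A, tensorStar A A (x ⊗ₜ[ℂ] y) = star x ⊗ₜ[ℂ] star y := by
    intro x y
    simp [tensorStar, TensorProduct.liftAddHom_tmul]
  -- counit on representatives
  have hcr : ∀ x : A, ∑ q ∈ D x, W.ε q.2 • q.1 = x := by
    intro x
    have h := W.counit_right x
    rw [hD x] at h
    simpa [map_sum] using h
  have hcl : ∀ x : A, ∑ q ∈ D x, W.ε q.1 • q.2 = x := by
    intro x
    have h := W.counit_left x
    rw [hD x] at h
    simpa [map_sum] using h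
  -- the maps a ↦ Σ a₍₁₎ S(a₍₂₎) and a ↦ Σ S(a₍₁₎) a₍₂₎ expanded
  have hsum2 : ∀ x : A, ∑ r ∈ D x, r.1 * W.S r.2 = W.swIdS x := by
    intro x
    simp only [WeakHopfAlgebra.swIdS]
    rw [hD x]
    simp [map_sum]
  have hsum1 : ∀ x : A, ∑ w ∈ D x, W.S w.1 * w.2 = W.swSId x := by
    intro x
    simp only [WeakHopfAlgebra.swSId]
    rw [hD x]
    simp [map_sum]
  have hswIdS : ∀ a : A, W.swIdS a = ∑ p ∈ D 1, W.ε (p.1 * a) • p.2 := by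
    intro a
    have h := W.antipode_right a
    rw [hD 1] at h
    simp only [WeakHopfAlgebra.swIdS]
    rw [h]
    simp [map_sum]
  have hswSId : ∀ a : A, W.swSId a = ∑ p ∈ D 1, W.ε (a * p.2) • p.1 := by
    intro a
    have h := W.antipode_left a
    rw [hD 1] at h
    simp only [WeakHopfAlgebra.swSId]
    rw [h]
    simp [map_sum]
  -- weak counit axioms on representatives
  have hcw : ∀ x y z : A, W.ε (x * y * z) = ∑ q ∈ D y, W.ε (x * q.1) * W.ε (q.2 * z) := by
    intro x y z
    have h := W.counit_weak x y z
    rw [hD y] at h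
    simpa [map_sum, smul_eq_mul] using h
  have hcw' : ∀ x y z : A, W.ε (x * y * z) = ∑ q ∈ D y, W.ε (q.1 * z) * W.ε (x * q.2) := by
    intro x y z
    have h := W.counit_weak' x y z
    rw [hD y] at h
    simpa [map_sum, smul_eq_mul] using h
  -- coassociativity: regrouping of double sums against a trilinear form
  have htri : ∀ (y : A) (T : A →ₗ[ℂ] A →ₗ[ℂ] A →ₗ[ℂ] ℂ),
      ∑ q ∈ D y, ∑ r ∈ D q.1, T r.1 r.2 q.2
        = ∑ q ∈ D y, ∑ r ∈ D q.2, T q.1 r.1 r.2 := by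
    intro y T
    have h : (TensorProduct.assoc ℂ A A A).toLinearMap
        ((TensorProduct.map W.Δ (LinearMap.id : A →ₗ[ℂ] A)) (W.Δ y))
        = (TensorProduct.map (LinearMap.id : A →ₗ[ℂ] A) W.Δ) (W.Δ y) := W.coassoc y
    have h2 := congrArg (TensorProduct.lift
      ((TensorProduct.lift.equiv (RingHom.id ℂ) A A ℂ).toLinearMap ∘ₗ T)) h
    rw [hD y] at h2
    simp only [hD, TensorProduct.sum_tmul, TensorProduct.tmul_sum,
      TensorProduct.map_tmul, LinearMap.id_coe, id_eq, map_sum,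
      LinearEquiv.coe_coe, TensorProduct.assoc_tmul,
      TensorProduct.lift.tmul, LinearMap.coe_comp, Function.comp_apply,
      TensorProduct.lift.equiv_apply] at h2
    exact h2
  -- antipode_mid on representatives
  have hmid : ∀ b : A, W.S b = ∑ q ∈ D b, ∑ r ∈ D q.1, W.S r.1 * r.2 * W.S q.2 := by
    intro b
    have h := W.antipode_mid b
    rw [hD b] at h
    simp only [hD, map_sum, TensorProduct.sum_tmul, TensorProduct.tmul_sum,
      TensorProduct.map_tmul, LinearMap.id_coe, id_eq, LinearMap.mul'_apply,
      LinearMap.coe_comp, Function.comp_apply] at h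
    exact h.symm
  -- Σ ε(x₍₁₎ · S(x₍₂₎)) = ε(x)
  have h6 : ∀ x : A, ∑ r ∈ D x, W.ε (r.1 * W.S r.2) = W.ε x := by
    intro x
    have h1 : ∑ r ∈ D x, W.ε (r.1 * W.S r.2) = W.ε (W.swIdS x) := by
      rw [← hsum2 x, map_sum]
    rw [h1, hswIdS x, map_sum]
    conv_rhs => rw [← one_mul x, ← hcr 1]
    rw [Finset.sum_mul, map_sum]
    refine Finset.sum_congr rfl fun p _ => ?_
    simp [smul_mul_assoc, smul_eq_mul, mul_comm]
  -- Σ ε(c · S(x₍₁₎) · x₍₂₎) = Σ ε(x · 1₍₂₎) ε(c · 1₍₁₎)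
  have hstep4 : ∀ c x : A, ∑ w ∈ D x, W.ε (c * W.S w.1 * w.2)
      = ∑ p ∈ D 1, W.ε (x * p.2) * W.ε (c * p.1) := by
    intro c x
    have h1 : ∑ w ∈ D x, W.ε (c * W.S w.1 * w.2) = W.ε (c * W.swSId x) := by
      rw [← hsum1 x, Finset.mul_sum, map_sum]
      exact Finset.sum_congr rfl fun w _ => by rw [mul_assoc]
    rw [h1, hswSId x, Finset.mul_sum, map_sum]
    refine Finset.sum_congr rfl fun p _ => ?_
    simp [mul_smul_comm, smul_eq_mul]
  -- the key identity : ε(c · S(b)) = Σ ε(c · 1₍₁₎) ε(b · 1₍₂₎)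
  have hK : ∀ c b : A, W.ε (c * W.S b) = ∑ p ∈ D 1, W.ε (c * p.1) * W.ε (b * p.2) := by
    intro c b
    calc
      W.ε (c * W.S b)
          = ∑ q ∈ D b, ∑ r ∈ D q.1, W.ε (c * W.S r.1 * r.2 * W.S q.2) := by
            rw [hmid b, Finset.mul_sum, map_sum]
            refine Finset.sum_congr rfl fun q _ => ?_
            rw [Finset.mul_sum, map_sum]
            refine Finset.sum_congr rfl fun r _ => ?_
            congr 1
            rw [← mul_assoc, ← mul_assoc]
      _ = ∑ q ∈ D b, ∑ r ∈ D q.1, ∑ w ∈ D r.2,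
            W.ε (c * W.S r.1 * w.1) * W.ε (w.2 * W.S q.2) := by
            refine Finset.sum_congr rfl fun q _ => Finset.sum_congr rfl fun r _ => ?_
            exact hcw (c * W.S r.1) r.2 (W.S q.2)
      _ = ∑ q ∈ D b, ∑ r ∈ D q.1,
            (∑ w ∈ D r.1, W.ε (c * W.S w.1 * w.2)) * W.ε (r.2 * W.S q.2) := by
            refine Finset.sum_congr rfl fun q _ => ?_
            have h := (htri q.1 (LinearMap.mk₂ ℂ
              (fun x y => W.ε (c * W.S x * y) • (W.ε ∘ₗ LinearMap.mulRight ℂ (W.S q.2)))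
              (by intros; ext z; simp [map_add, mul_add, add_mul, add_smul] <;> ring)
              (by intros; ext z; simp [map_smul, smul_mul_assoc, mul_smul_comm, smul_eq_mul] <;> ring)
              (by intros; ext z; simp [mul_add, add_smul] <;> ring)
              (by intros; ext z; simp [mul_smul_comm, smul_eq_mul] <;> ring))).symm
            simp only [LinearMap.mk₂_apply, LinearMap.smul_apply, LinearMap.coe_comp,
              Function.comp_apply, LinearMap.mulRight_apply, smul_eq_mul] at h
            rw [h]
            exact Finset.sum_congr rfl fun r _ => by rw [Finset.sum_mul]
      _ = ∑ q ∈ D b, ∑ r ∈ D q.1,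
            (∑ p ∈ D 1, W.ε (r.1 * p.2) * W.ε (c * p.1)) * W.ε (r.2 * W.S q.2) := by
            refine Finset.sum_congr rfl fun q _ => Finset.sum_congr rfl fun r _ => ?_
            rw [hstep4 c r.1]
      _ = ∑ p ∈ D 1, W.ε (c * p.1) *
            ∑ q ∈ D b, ∑ r ∈ D q.1, W.ε (r.1 * p.2) * W.ε (r.2 * W.S q.2) := by
            simp only [Finset.sum_mul, Finset.mul_sum]
            rw [← Finset.sum_comm]
            refine Finset.sum_congr rfl fun q _ => ?_
            rw [← Finset.sum_comm]
            refine Finset.sum_congr rfl fun r _ => Finset.sum_congr rfl fun p _ => ?_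
            ring
      _ = ∑ p ∈ D 1, W.ε (c * p.1) *
            ∑ q ∈ D b, W.ε (q.1 * p.2) * ∑ r ∈ D q.2, W.ε (r.1 * W.S r.2) := by
            refine Finset.sum_congr rfl fun p _ => ?_
            congr 1
            have h := htri b (LinearMap.mk₂ ℂ
              (fun x y => W.ε (x * p.2) • (W.ε ∘ₗ (LinearMap.mulLeft ℂ y ∘ₗ W.S)))
              (by intros; ext z; simp [add_mul, add_smul] <;> ring)
              (by intros; ext z; simp [smul_mul_assoc, smul_eq_mul] <;> ring)
              (by intros; ext z; simp [add_mul, mul_add, add_smul] <;> ring)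
              (by intros; ext z; simp [smul_mul_assoc, mul_smul_comm, smul_eq_mul] <;> ring))
            simp only [LinearMap.mk₂_apply, LinearMap.smul_apply, LinearMap.coe_comp,
              Function.comp_apply, LinearMap.mulLeft_apply, smul_eq_mul] at h
            rw [h]
            exact Finset.sum_congr rfl fun q _ => by rw [Finset.mul_sum]
      _ = ∑ p ∈ D 1, W.ε (c * p.1) * ∑ q ∈ D b, W.ε (q.1 * p.2) * W.ε q.2 := by
            refine Finset.sum_congr rfl fun p _ => ?_
            congr 1
            exact Finset.sum_congr rfl fun q _ => by rw [h6 q.2]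
      _ = ∑ p ∈ D 1, W.ε (c * p.1) * W.ε (b * p.2) := by
            refine Finset.sum_congr rfl fun p _ => ?_
            congr 1
            conv_rhs => rw [← hcr b]
            rw [Finset.sum_mul, map_sum]
            refine Finset.sum_congr rfl fun q _ => ?_
            simp [smul_mul_assoc, smul_eq_mul, mul_comm]
  -- consequence of the weak unit axiom
  have h4d : ∑ p ∈ D 1, ∑ p' ∈ D 1, W.ε (p.2 * p'.1) • (p.1 ⊗ₜ[ℂ] p'.2) = W.Δ 1 := by
    have hL : (TensorProduct.map
          ((TensorProduct.rid ℂ A).toLinearMap ∘ₗ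
            TensorProduct.map (LinearMap.id : A →ₗ[ℂ] A) W.ε) (LinearMap.id : A →ₗ[ℂ] A))
        ((W.Δ 1 ⊗ₜ[ℂ] (1 : A)) * ((TensorProduct.assoc ℂ A A A).symm ((1 : A) ⊗ₜ[ℂ] W.Δ 1)))
        = ∑ p ∈ D 1, ∑ p' ∈ D 1, W.ε (p.2 * p'.1) • (p.1 ⊗ₜ[ℂ] p'.2) := by
      rw [hD 1]
      rw [TensorProduct.sum_tmul, TensorProduct.tmul_sum, map_sum, Finset.sum_mul_sum]
      simp only [map_sum]
      refine Finset.sum_congr rfl fun p _ => Finset.sum_congr rfl fun p' _ => ?_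
      simp [Algebra.TensorProduct.tmul_mul_tmul, TensorProduct.assoc_symm_tmul,
        TensorProduct.map_tmul, TensorProduct.rid_tmul, TensorProduct.smul_tmul']
    have hR : (TensorProduct.map
          ((TensorProduct.rid ℂ A).toLinearMap ∘ₗ
            TensorProduct.map (LinearMap.id : A →ₗ[ℂ] A) W.ε) (LinearMap.id : A →ₗ[ℂ] A))
        ((TensorProduct.map W.Δ (LinearMap.id : A →ₗ[ℂ] A)) (W.Δ 1)) = W.Δ 1 := by
      conv_lhs => rw [hD 1]
      rw [map_sum, map_sum]
      conv_rhs => rw [hD 1]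
      refine Finset.sum_congr rfl fun q _ => ?_
      rw [TensorProduct.map_tmul, hD q.1]
      conv_rhs => rw [show (q.1 : A) = ∑ r ∈ D q.1, W.ε r.2 • r.1 from (hcr q.1).symm]
      rw [TensorProduct.sum_tmul, map_sum, TensorProduct.sum_tmul]
      refine Finset.sum_congr rfl fun r _ => ?_
      simp [TensorProduct.map_tmul, TensorProduct.rid_tmul, TensorProduct.smul_tmul']
    rw [← hL, W.unit_weak]
    exact hR
  -- the expansion of swIdSinv : Σ a₍₂₎ S⁻¹(a₍₁₎) = Σ 1₍₁₎ ε(1₍₂₎ a)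
  have hL2 : ∀ a : A, W.swIdSinv a = ∑ p ∈ D 1, W.ε (p.2 * a) • p.1 := by
    have key : ∀ b : A, W.swIdSinv (W.S b) = ∑ p ∈ D 1, W.ε (p.2 * W.S b) • p.1 := by
      intro b
      have h1 : W.swIdSinv (W.S b) = W.swSId b := by
        simp only [WeakHopfAlgebra.swIdSinv, WeakHopfAlgebra.swSId]
        rw [W.S_anticomul b, hD b]
        simp [map_sum, TensorProduct.comm_tmul, TensorProduct.map_tmul,
          LinearMap.mul'_apply, W.Sinv_S]
      rw [h1, hswSId b]
      have h2 : ∑ p ∈ D 1, W.ε (p.2 * W.S b) • p.1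
          = ∑ p ∈ D 1, ∑ p' ∈ D 1, (W.ε (p.2 * p'.1) * W.ε (b * p'.2)) • p.1 := by
        refine Finset.sum_congr rfl fun p _ => ?_
        rw [hK p.2 b, Finset.sum_smul]
      rw [h2]
      have h3 := congrArg (TensorProduct.lift (LinearMap.mk₂ ℂ
        (fun x y => W.ε (b * y) • x)
        (by intros; simp [add_smul, smul_add] <;> ring)
        (by intros; simp [smul_smul] <;> ring)
        (by intros; simp [mul_add, add_smul] <;> ring)
        (by intros; simp [mul_smul_comm, smul_smul, smul_eq_mul] <;> ring))) h4d
      rw [hD 1] at h3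
      simp only [map_sum, map_smul, TensorProduct.lift.tmul, LinearMap.mk₂_apply] at h3
      rw [← h3]
      refine Finset.sum_congr rfl fun p _ => Finset.sum_congr rfl fun p' _ => ?_
      rw [smul_smul]
    intro a
    have := key (W.Sinv a)
    rwa [W.S_Sinv a] at this
  -- ε ∘ S = ε
  have hεS : ∀ b : A, W.ε (W.S b) = W.ε b := by
    intro b
    have h := hK 1 b
    rw [one_mul] at h
    simp only [one_mul] at h
    rw [h]
    conv_rhs => rw [show (b : A) = b * 1 from (mul_one b).symm,
      show (1 : A) = ∑ p ∈ D 1, W.ε p.1 • p.2 from (hcl 1).symm]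
    rw [Finset.mul_sum, map_sum]
    refine Finset.sum_congr rfl fun p _ => ?_
    simp [mul_smul_comm, smul_eq_mul, mul_comm]
  -- ε(star x) = star (ε x)
  have hεstar : ∀ x : A, W.ε (star x) = star (W.ε x) := by
    intro x
    have e1 : W.ε (star x) = ∑ q ∈ D x, star (W.ε q.2) * W.ε (star q.1) := by
      conv_lhs => rw [show (x : A) = ∑ q ∈ D x, W.ε q.2 • q.1 from (hcr x).symm]
      rw [star_sum, map_sum]
      refine Finset.sum_congr rfl fun q _ => ?_
      rw [star_smul]
      simp [smul_eq_mul]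
    have e2 : star (W.ε x) = ∑ q ∈ D x, star (W.ε q.2) * star (W.ε q.1) := by
      conv_lhs => rw [show (x : A) = ∑ q ∈ D x, W.ε q.2 • q.1 from (hcr x).symm]
      rw [map_sum, star_sum]
      refine Finset.sum_congr rfl fun q _ => ?_
      simp [map_smul, smul_eq_mul, star_mul']
    have h0 : ∑ q ∈ D x, (W.ε (star q.1) - star (W.ε q.1)) • star q.2 = (0 : A) := by
      have hA1 : ∑ q ∈ D x, W.ε (star q.1) • star q.2 = star x := by
        have h := W.counit_left (star x)
        rw [W.Δ_star x, hD x] at h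
        simp only [map_sum, htS, TensorProduct.map_tmul, TensorProduct.lid_tmul,
          LinearMap.id_coe, id_eq] at h
        exact h
      have hB1 : star x = ∑ q ∈ D x, star (W.ε q.1) • star q.2 := by
        conv_lhs => rw [show (x : A) = ∑ q ∈ D x, W.ε q.1 • q.2 from (hcl x).symm]
        rw [star_sum]
        exact Finset.sum_congr rfl fun q _ => by rw [star_smul]
      have h := hA1.trans hB1
      rw [← sub_eq_zero, ← Finset.sum_sub_distrib] at h
      simpa [sub_smul] using h
    have e3 : ∑ q ∈ D x, star (W.ε q.2) * (W.ε (star q.1) - star (W.ε q.1)) = 0 := by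
      have h1 := congrArg (star : A → A) h0
      rw [star_sum] at h1
      simp only [star_smul, star_star, star_zero] at h1
      have h2 := congrArg W.ε h1
      rw [map_sum] at h2
      simp only [map_smul, smul_eq_mul, map_zero] at h2
      have h3 := congrArg (star : ℂ → ℂ) h2
      rw [star_sum] at h3
      simp only [star_mul', star_star, star_zero] at h3
      rw [← h3]
      exact Finset.sum_congr rfl fun q _ => by ring
    have : W.ε (star x) - star (W.ε x) = 0 := by
      rw [e1, e2, ← Finset.sum_sub_distrib, ← e3]
      exact Finset.sum_congr rfl fun q _ => by ring
    exact sub_eq_zero.mp this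
  -- Δ(S a) on representatives
  have hΔS : ∀ a : A, W.Δ (W.S a) = ∑ q ∈ D a, W.S q.2 ⊗ₜ[ℂ] W.S q.1 := by
    intro a
    rw [W.S_anticomul a, hD a, map_sum]
    simp [map_sum, TensorProduct.map_tmul, TensorProduct.comm_tmul]
  -- action of a linear combination on 1
  have hact_sum : ∀ (s : Finset (A × A)) (f : A × A → ℂ) (g : A × A → A),
      act (∑ p ∈ s, f p • g p) 1 = ∑ p ∈ s, f p • act (g p) 1 := by
    intro s f g
    rw [map_sum, LinearMap.sum_apply]
    refine Finset.sum_congr rfl fun p _ => ?_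
    rw [map_smul, LinearMap.smul_apply]
  -- the RHS of condition (iii) on representatives
  have hiii_expand : ∀ a b : A,
      (TensorProduct.lid ℂ M)
          ((TensorProduct.map (W.ε ∘ₗ LinearMap.mulRight ℂ b) (act.flip 1)) (W.Δ a))
        = ∑ q ∈ D a, W.ε (q.1 * b) • act q.2 1 := by
    intro a b
    rw [hD a, map_sum, map_sum]
    refine Finset.sum_congr rfl fun q _ => ?_
    simp [TensorProduct.map_tmul, TensorProduct.lid_tmul, LinearMap.flip_apply]
  -- the RHS of condition (iv) on representatives
  have hiv_expand : ∀ a b : A,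
      (TensorProduct.rid ℂ M)
          ((TensorProduct.map (act.flip 1) (W.ε ∘ₗ LinearMap.mulRight ℂ b)) (W.Δ a))
        = ∑ q ∈ D a, W.ε (q.2 * b) • act q.1 1 := by
    intro a b
    rw [hD a, map_sum, map_sum]
    refine Finset.sum_congr rfl fun q _ => ?_
    simp [TensorProduct.map_tmul, TensorProduct.rid_tmul, LinearMap.flip_apply]
  -- (iii) → (i)
  have h31 : (∀ a b : A, act (a * b) 1 =
        (TensorProduct.lid ℂ M)
          ((TensorProduct.map (W.ε ∘ₗ LinearMap.mulRight ℂ b) (act.flip 1)) (W.Δ a))) →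
      ∀ a : A, act a 1 = act (W.swIdS a) 1 := by
    intro h3 a
    have h := h3 1 a
    rw [one_mul] at h
    rw [h, hiii_expand 1 a, hswIdS a, hact_sum]
  -- (i) → (iii)
  have h13 : (∀ a : A, act a 1 = act (W.swIdS a) 1) →
      ∀ a b : A, act (a * b) 1 =
        (TensorProduct.lid ℂ M)
          ((TensorProduct.map (W.ε ∘ₗ LinearMap.mulRight ℂ b) (act.flip 1)) (W.Δ a)) := by
    intro h1 a b
    rw [hiii_expand a b]
    calc act (a * b) 1 = act (W.swIdS (a * b)) 1 := h1 _
      _ = ∑ p ∈ D 1, W.ε (p.1 * (a * b)) • act p.2 1 := by rw [hswIdS, hact_sum]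
      _ = ∑ p ∈ D 1, ∑ q ∈ D a, (W.ε (q.1 * b) * W.ε (p.1 * q.2)) • act p.2 1 := by
          refine Finset.sum_congr rfl fun p _ => ?_
          rw [← mul_assoc, hcw' p.1 a b, Finset.sum_smul]
      _ = ∑ q ∈ D a, W.ε (q.1 * b) • act (W.swIdS q.2) 1 := by
          rw [Finset.sum_comm]
          refine Finset.sum_congr rfl fun q _ => ?_
          rw [hswIdS, hact_sum, Finset.smul_sum]
          refine Finset.sum_congr rfl fun p _ => ?_
          rw [smul_smul]
      _ = ∑ q ∈ D a, W.ε (q.1 * b) • act q.2 1 := by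
          refine Finset.sum_congr rfl fun q _ => ?_
          rw [← h1 q.2]
  -- (iv) → (ii)
  have h42 : (∀ a b : A, act (a * b) 1 =
        (TensorProduct.rid ℂ M)
          ((TensorProduct.map (act.flip 1) (W.ε ∘ₗ LinearMap.mulRight ℂ b)) (W.Δ a))) →
      ∀ a : A, act a 1 = act (W.swIdSinv a) 1 := by
    intro h4 a
    have h := h4 1 a
    rw [one_mul] at h
    rw [h, hiv_expand 1 a, hL2 a, hact_sum]
  -- (ii) → (iv)
  have h24 : (∀ a : A, act a 1 = act (W.swIdSinv a) 1) →
      ∀ a b : A, act (a * b) 1 =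
        (TensorProduct.rid ℂ M)
          ((TensorProduct.map (act.flip 1) (W.ε ∘ₗ LinearMap.mulRight ℂ b)) (W.Δ a)) := by
    intro h2 a b
    rw [hiv_expand a b]
    calc act (a * b) 1 = act (W.swIdSinv (a * b)) 1 := h2 _
      _ = ∑ p ∈ D 1, W.ε (p.2 * (a * b)) • act p.1 1 := by rw [hL2, hact_sum]
      _ = ∑ p ∈ D 1, ∑ q ∈ D a, (W.ε (p.2 * q.1) * W.ε (q.2 * b)) • act p.1 1 := by
          refine Finset.sum_congr rfl fun p _ => ?_
          rw [← mul_assoc, hcw p.2 a b, Finset.sum_smul]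
      _ = ∑ q ∈ D a, W.ε (q.2 * b) • act (W.swIdSinv q.1) 1 := by
          rw [Finset.sum_comm]
          refine Finset.sum_congr rfl fun q _ => ?_
          rw [hL2, hact_sum, Finset.smul_sum]
          refine Finset.sum_congr rfl fun p _ => ?_
          rw [smul_smul, mul_comm]
      _ = ∑ q ∈ D a, W.ε (q.2 * b) • act q.1 1 := by
          refine Finset.sum_congr rfl fun q _ => ?_
          rw [← h2 q.1]
  refine ⟨⟨⟨h13, h31⟩, ⟨h24, h42⟩⟩, fun hst => ?_⟩
  -- star compatibility
  have hstar1 : ∀ x : A, act (star (W.S x)) 1 = star (act x 1) := by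
    intro x
    have h := hst x 1
    rw [star_one] at h
    exact h.symm
  -- (iii) → (iv)
  have h34 : (∀ a b : A, act (a * b) 1 =
        (TensorProduct.lid ℂ M)
          ((TensorProduct.map (W.ε ∘ₗ LinearMap.mulRight ℂ b) (act.flip 1)) (W.Δ a))) →
      ∀ a b : A, act (a * b) 1 =
        (TensorProduct.rid ℂ M)
          ((TensorProduct.map (act.flip 1) (W.ε ∘ₗ LinearMap.mulRight ℂ b)) (W.Δ a)) := by
    intro h3 a b
    rw [hiv_expand a b]
    have key : star (act (a * b) 1) = star (∑ q ∈ D a, W.ε (q.2 * b) • act q.1 1) := by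
      calc star (act (a * b) 1) = act (star (W.S (a * b))) 1 := by
            rw [hst (a * b) 1, star_one]
        _ = act (star (W.S a) * star (W.S b)) 1 := by
            rw [W.S_antimul a b, star_mul]
        _ = (TensorProduct.lid ℂ M)
              ((TensorProduct.map (W.ε ∘ₗ LinearMap.mulRight ℂ (star (W.S b)))
                (act.flip 1)) (W.Δ (star (W.S a)))) := h3 _ _
        _ = ∑ q ∈ D a, W.ε (star (W.S q.2) * star (W.S b)) • act (star (W.S q.1)) 1 := by
            rw [W.Δ_star (W.S a), hΔS a, map_sum, map_sum, map_sum]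
            refine Finset.sum_congr rfl fun q _ => ?_
            simp [htS, TensorProduct.map_tmul, TensorProduct.lid_tmul,
              LinearMap.flip_apply]
        _ = ∑ q ∈ D a, star (W.ε (q.2 * b) • act q.1 1) := by
            refine Finset.sum_congr rfl fun q _ => ?_
            have e : star (W.S q.2) * star (W.S b) = star (W.S (q.2 * b)) := by
              rw [W.S_antimul q.2 b, star_mul]
            rw [e, hεstar, hεS, hstar1 q.1, star_smul]
        _ = star (∑ q ∈ D a, W.ε (q.2 * b) • act q.1 1) := (star_sum _ _).symm
    exact star_injective key
  -- (iv) → (iii)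
  have h43 : (∀ a b : A, act (a * b) 1 =
        (TensorProduct.rid ℂ M)
          ((TensorProduct.map (act.flip 1) (W.ε ∘ₗ LinearMap.mulRight ℂ b)) (W.Δ a))) →
      ∀ a b : A, act (a * b) 1 =
        (TensorProduct.lid ℂ M)
          ((TensorProduct.map (W.ε ∘ₗ LinearMap.mulRight ℂ b) (act.flip 1)) (W.Δ a)) := by
    intro h4 a b
    rw [hiii_expand a b]
    have key : star (act (a * b) 1) = star (∑ q ∈ D a, W.ε (q.1 * b) • act q.2 1) := by
      calc star (act (a * b) 1) = act (star (W.S (a * b))) 1 := by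
            rw [hst (a * b) 1, star_one]
        _ = act (star (W.S a) * star (W.S b)) 1 := by
            rw [W.S_antimul a b, star_mul]
        _ = (TensorProduct.rid ℂ M)
              ((TensorProduct.map (act.flip 1)
                (W.ε ∘ₗ LinearMap.mulRight ℂ (star (W.S b)))) (W.Δ (star (W.S a)))) := h4 _ _
        _ = ∑ q ∈ D a, W.ε (star (W.S q.1) * star (W.S b)) • act (star (W.S q.2)) 1 := by
            rw [W.Δ_star (W.S a), hΔS a, map_sum, map_sum, map_sum]
            refine Finset.sum_congr rfl fun q _ => ?_
            simp [htS, TensorProduct.map_tmul, TensorProduct.rid_tmul,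
              LinearMap.flip_apply]
        _ = ∑ q ∈ D a, star (W.ε (q.1 * b) • act q.2 1) := by
            refine Finset.sum_congr rfl fun q _ => ?_
            have e : star (W.S q.1) * star (W.S b) = star (W.S (q.1 * b)) := by
              rw [W.S_antimul q.1 b, star_mul]
            rw [e, hεstar, hεS, hstar1 q.2, star_smul]
        _ = star (∑ q ∈ D a, W.ε (q.1 * b) • act q.2 1) := (star_sum _ _).symm
    exact star_injective key
  constructor
  · exact ⟨fun h1 => h42 (h34 (h13 h1)), fun h2 => h31 (h43 (h24 h2))⟩
  · exact ⟨fun h1 => h34 (h13 h1), fun h4 => h31 (h43 h4)⟩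
end
end

section
/- Let M be an A-module algebra over a weak *-Hopf algebra A. Then for all a ∈ A and m ∈ M one has (a▷1_M)·m = Σ (a₍₁₎·S(a₍₂₎))▷m; consequently (a▷1_M)·(b▷1_M) = Σ (a₍₁₎·S(a₍₂₎)·b)▷1_M for all a, b ∈ A, and M_R := A▷1_M is a unital subalgebra of M which is closed under the star operation. -/
open scoped TensorProduct

noncomputable section

section Aux

set_option synthInstance.maxHeartbeats 1000000
set_option maxHeartbeats 1000000

variable {A : Type} [Ring A] [Algebra ℂ A] [StarRing A] [StarModule ℂ A]
variable {M : Type} [Ring M] [Algebra ℂ M] [StarRing M] [StarModule ℂ M]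

/-- Key identity: `Δ(swIdS a) = Δ(1) · (swIdS a ⊗ 1)`. -/
lemma key1 (W : WeakHopfAlgebra A) (a : A) :
    W.Δ (W.swIdS a) = W.Δ 1 * ((W.swIdS a) ⊗ₜ[ℂ] (1 : A)) := by
  set φ : A →ₗ[ℂ] ℂ := W.ε ∘ₗ LinearMap.mulRight ℂ a with hφ
  have hsw : W.swIdS a
      = (TensorProduct.lid ℂ A) ((TensorProduct.map φ (LinearMap.id : A →ₗ[ℂ] A)) (W.Δ 1)) :=
    W.antipode_right a
  have H1 : ∀ w : A ⊗[ℂ] A,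
      W.Δ ((TensorProduct.lid ℂ A) ((TensorProduct.map φ (LinearMap.id : A →ₗ[ℂ] A)) w))
        = (TensorProduct.lid ℂ (A ⊗[ℂ] A))
            ((TensorProduct.map φ (LinearMap.id : A ⊗[ℂ] A →ₗ[ℂ] A ⊗[ℂ] A))
              ((TensorProduct.map (LinearMap.id : A →ₗ[ℂ] A) W.Δ) w)) := by
    intro w
    induction w using TensorProduct.induction_on with
    | zero => simp
    | tmul p q => simp
    | add x y hx hy => simp [map_add, hx, hy]
  have hco : (TensorProduct.map (LinearMap.id : A →ₗ[ℂ] A) W.Δ) (W.Δ 1)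
      = (TensorProduct.assoc ℂ A A A)
          (((TensorProduct.assoc ℂ A A A).symm ((1 : A) ⊗ₜ[ℂ] W.Δ 1))
            * (W.Δ 1 ⊗ₜ[ℂ] (1 : A))) := by
    rw [W.unit_weak', W.coassoc 1]
  have H2 : ∀ u v : A ⊗[ℂ] A,
      (TensorProduct.lid ℂ (A ⊗[ℂ] A))
        ((TensorProduct.map φ (LinearMap.id : A ⊗[ℂ] A →ₗ[ℂ] A ⊗[ℂ] A))
          ((TensorProduct.assoc ℂ A A A)
            (((TensorProduct.assoc ℂ A A A).symm ((1 : A) ⊗ₜ[ℂ] u)) * (v ⊗ₜ[ℂ] (1 : A)))))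
        = u * (((TensorProduct.lid ℂ A)
            ((TensorProduct.map φ (LinearMap.id : A →ₗ[ℂ] A)) v)) ⊗ₜ[ℂ] (1 : A)) := by
    intro u v
    induction u using TensorProduct.induction_on with
    | zero => simp
    | add x y hx hy =>
        simp only [TensorProduct.tmul_add, map_add, add_mul, mul_add] at hx hy ⊢
        rw [hx, hy]
    | tmul u₁ u₂ =>
        induction v using TensorProduct.induction_on with
        | zero => simp
        | add x y hx hy =>
            simp only [TensorProduct.add_tmul, map_add, add_mul, mul_add,
              TensorProduct.tmul_add] at hx hy ⊢
            rw [hx, hy]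
        | tmul v₁ v₂ =>
            simp [Algebra.TensorProduct.tmul_mul_tmul, TensorProduct.assoc_symm_tmul,
              TensorProduct.assoc_tmul, TensorProduct.lid_tmul, TensorProduct.smul_tmul',
              mul_smul_comm]
  rw [hsw, H1, hco]
  exact H2 (W.Δ 1) (W.Δ 1)

lemma key2 {W : WeakHopfAlgebra A} (MA : ModuleAlgebra W M)
    (u : A ⊗[ℂ] A) (x : A) (m : M) :
    LinearMap.mul' ℂ M
      ((TensorProduct.map (MA.act.flip 1) (MA.act.flip m)) (u * (x ⊗ₜ[ℂ] (1 : A))))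
      = LinearMap.mul' ℂ M
          ((TensorProduct.map (MA.act.flip (MA.act x 1)) (MA.act.flip m)) u) := by
  induction u using TensorProduct.induction_on with
  | zero => simp
  | add y z hy hz => simp only [add_mul, map_add, hy, hz]
  | tmul p q =>
      simp [Algebra.TensorProduct.tmul_mul_tmul, LinearMap.mul'_apply, MA.act_mul]

lemma key3 {W : WeakHopfAlgebra A} (MA : ModuleAlgebra W M) (a : A) (m : M) :
    MA.act (W.swIdS a) m = MA.act (W.swIdS a) 1 * m := by
  conv_lhs => rw [← one_mul m]
  rw [MA.act_mul', key1 W a, key2 MA, ← MA.act_mul', MA.act_one]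

end Aux

/-- Proposition 2.6 of [NSW]: in an `A`-module algebra `M` one has
`(a ▷ 1)·m = Σ (a₍₁₎ S(a₍₂₎)) ▷ m`, hence
`(a ▷ 1)(b ▷ 1) = Σ (a₍₁₎ S(a₍₂₎) b) ▷ 1`, and `M_R = A ▷ 1_M` is a unital
subalgebra of `M` closed under the star operation. -/
theorem MR_subalgebra
    {A M : Type} [Ring A] [Algebra ℂ A] [StarRing A] [StarModule ℂ A]
    [Ring M] [Algebra ℂ M] [StarRing M] [StarModule ℂ M]
    (W : WeakHopfAlgebra A) (MA : ModuleAlgebra W M) :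
    (∀ (a : A) (m : M), MA.act a 1 * m = MA.act (W.swIdS a) m)
    ∧ (∀ a b : A, MA.act a 1 * MA.act b 1 = MA.act (W.swIdS a * b) 1)
    ∧ (1 : M) ∈ MA.MR
    ∧ (∀ x ∈ MA.MR, ∀ y ∈ MA.MR, x * y ∈ MA.MR)
    ∧ (∀ x ∈ MA.MR, ∀ y ∈ MA.MR, x + y ∈ MA.MR)
    ∧ (∀ (c : ℂ), ∀ x ∈ MA.MR, c • x ∈ MA.MR)
    ∧ (∀ x ∈ MA.MR, star x ∈ MA.MR)  := by
  have claim1 : ∀ (a : A) (m : M), MA.act a 1 * m = MA.act (W.swIdS a) m := by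
    intro a m
    rw [MA.act_unit a, key3 MA a m]
  have claim2 : ∀ a b : A, MA.act a 1 * MA.act b 1 = MA.act (W.swIdS a * b) 1 := by
    intro a b
    rw [claim1 a (MA.act b 1), MA.act_mul]
  refine ⟨claim1, claim2, ⟨1, MA.act_one 1⟩, ?_, ?_, ?_, ?_⟩
  · rintro x ⟨a, rfl⟩ y ⟨b, rfl⟩
    exact ⟨W.swIdS a * b, (claim2 a b).symm⟩
  · rintro x ⟨a, rfl⟩ y ⟨b, rfl⟩
    exact ⟨a + b, by simp [map_add]⟩
  · rintro c x ⟨a, rfl⟩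
    exact ⟨c • a, by simp [map_smul]⟩
  · rintro x ⟨a, rfl⟩
    refine ⟨star (W.S a), ?_⟩
    rw [MA.act_star, star_one]
end
end

section
/- Let M be an A-module algebra over a weak *-Hopf algebra A. Then A▷1_M = A_L▷1_M, and the map μ_▷ : A_L → M, a ↦ a▷1_M, is a unital algebra homomorphism onto M_R := A▷1_M which preserves the star: (ab)▷1_M = (a▷1_M)·(b▷1_M) and (a▷1_M)* = a*▷1_M for all a, b ∈ A_L. -/
open scoped TensorProduct

noncomputable section

section AuxNSW

set_option maxHeartbeats 1000000
set_option synthInstance.maxHeartbeats 400000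
set_option linter.unusedSectionVars false

open TensorProduct

variable {A : Type} [Ring A] [Algebra ℂ A] [StarRing A] [StarModule ℂ A]
variable {M : Type} [Ring M] [Algebra ℂ M] [StarRing M] [StarModule ℂ M]

lemma aux_map_map {M₁ M₂ M₃ N₁ N₂ N₃ : Type} [AddCommMonoid M₁] [AddCommMonoid M₂]
    [AddCommMonoid M₃] [AddCommMonoid N₁] [AddCommMonoid N₂] [AddCommMonoid N₃]
    [Module ℂ M₁] [Module ℂ M₂] [Module ℂ M₃] [Module ℂ N₁] [Module ℂ N₂] [Module ℂ N₃]
    (f : M₂ →ₗ[ℂ] M₃) (f' : M₁ →ₗ[ℂ] M₂) (g : N₂ →ₗ[ℂ] N₃) (g' : N₁ →ₗ[ℂ] N₂)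
    (t : M₁ ⊗[ℂ] N₁) :
    TensorProduct.map f g (TensorProduct.map f' g' t)
      = TensorProduct.map (f ∘ₗ f') (g ∘ₗ g') t := by
  rw [TensorProduct.map_comp]; rfl

lemma aux_comm_comm (t : A ⊗[ℂ] A) :
    TensorProduct.comm ℂ A A (TensorProduct.comm ℂ A A t) = t := by
  induction t using TensorProduct.induction_on with
  | zero => simp
  | tmul a b => simp
  | add x y hx hy => simp [map_add, hx, hy]

lemma aux_map_comm (f g : A →ₗ[ℂ] A) (t : A ⊗[ℂ] A) :
    TensorProduct.map f g (TensorProduct.comm ℂ A A t)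
      = TensorProduct.comm ℂ A A (TensorProduct.map g f t) := by
  induction t using TensorProduct.induction_on with
  | zero => simp
  | tmul a b => simp
  | add x y hx hy => simp [map_add, hx, hy]

lemma aux_lid_nat (φ : A →ₗ[ℂ] ℂ) (g : A →ₗ[ℂ] A) (t : A ⊗[ℂ] A) :
    g ((TensorProduct.lid ℂ A) ((TensorProduct.map φ LinearMap.id) t))
      = (TensorProduct.lid ℂ A)
          ((TensorProduct.map φ LinearMap.id) ((TensorProduct.map LinearMap.id g) t)) := by
  induction t using TensorProduct.induction_on with
  | zero => simp
  | tmul a b => simp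
  | add x y hx hy => simp [map_add, hx, hy]

variable (W : WeakHopfAlgebra A)

lemma aux_swIdS_one :
    LinearMap.mul' ℂ A ((TensorProduct.map LinearMap.id W.S) (W.Δ 1)) = 1 := by
  have h := W.antipode_right 1
  rw [LinearMap.mulRight_one, LinearMap.comp_id] at h
  rw [h]
  exact W.counit_left 1

lemma aux_swSId_one :
    LinearMap.mul' ℂ A ((TensorProduct.map W.S LinearMap.id) (W.Δ 1)) = 1 := by
  have h := W.antipode_left 1
  rw [LinearMap.mulLeft_one, LinearMap.comp_id] at h
  rw [h]
  exact W.counit_right 1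

lemma aux_evalMid (u v : A ⊗[ℂ] A) :
    LinearMap.mul' ℂ A
      ((TensorProduct.map (LinearMap.mul' ℂ A ∘ₗ TensorProduct.map W.S LinearMap.id) W.S)
        ((u ⊗ₜ[ℂ] (1 : A)) * ((TensorProduct.assoc ℂ A A A).symm ((1 : A) ⊗ₜ[ℂ] v))))
    = LinearMap.mul' ℂ A (TensorProduct.map W.S LinearMap.id u)
        * LinearMap.mul' ℂ A (TensorProduct.map LinearMap.id W.S v) := by
  induction u using TensorProduct.induction_on with
  | zero => simp
  | tmul a b =>
    induction v using TensorProduct.induction_on with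
    | zero => simp
    | tmul c d =>
      simp [TensorProduct.assoc_symm_tmul, Algebra.TensorProduct.tmul_mul_tmul,
        LinearMap.mul'_apply, mul_assoc]
    | add x y hx hy =>
      simp only [TensorProduct.tmul_add, TensorProduct.add_tmul, map_add, mul_add, add_mul, hx, hy]
  | add x y hx hy =>
    simp only [TensorProduct.tmul_add, TensorProduct.add_tmul, map_add, mul_add, add_mul, hx, hy]

lemma aux_S_one : W.S 1 = 1 := by
  have h := W.antipode_mid 1
  rw [← W.unit_weak, aux_evalMid, aux_swSId_one, aux_swIdS_one, one_mul] at h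
  exact h.symm

lemma aux_comm_e :
    TensorProduct.comm ℂ A A (W.Δ 1) = TensorProduct.map W.S W.S (W.Δ 1) := by
  have h := W.S_anticomul 1
  rw [aux_S_one] at h
  conv_lhs => rw [h]
  exact aux_comm_comm _

lemma aux_id_Sinv_e :
    TensorProduct.map LinearMap.id W.Sinv (W.Δ 1)
      = TensorProduct.comm ℂ A A (TensorProduct.map LinearMap.id W.S (W.Δ 1)) := by
  have hSinvS : W.Sinv ∘ₗ W.S = LinearMap.id := LinearMap.ext W.Sinv_S
  have he : W.Δ 1 = TensorProduct.comm ℂ A A (TensorProduct.map W.S W.S (W.Δ 1)) := by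
    rw [← aux_comm_e]; exact (aux_comm_comm _).symm
  conv_lhs => rw [he]
  rw [aux_map_comm, aux_map_map, hSinvS, LinearMap.id_comp]

/-- The linear map `x ↦ Σ x₍₁₎ S(x₍₂₎)`. -/
def auxSwl : A →ₗ[ℂ] A :=
  LinearMap.mul' ℂ A ∘ₗ TensorProduct.map LinearMap.id W.S ∘ₗ W.Δ

lemma auxSwl_apply (x : A) : auxSwl W x = W.swIdS x := rfl

lemma aux_evalK2 (u v : A ⊗[ℂ] A) :
    (TensorProduct.map (LinearMap.mul' ℂ A ∘ₗ TensorProduct.map LinearMap.id W.S) LinearMap.id)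
      (((TensorProduct.assoc ℂ A A A).symm ((1 : A) ⊗ₜ[ℂ] u)) * (v ⊗ₜ[ℂ] (1 : A)))
    = ((LinearMap.mul' ℂ A (TensorProduct.map LinearMap.id W.S v)) ⊗ₜ[ℂ] (1 : A))
        * (TensorProduct.map W.S LinearMap.id u) := by
  induction u using TensorProduct.induction_on with
  | zero => simp
  | tmul a b =>
    induction v using TensorProduct.induction_on with
    | zero => simp
    | tmul c d =>
      simp [TensorProduct.assoc_symm_tmul, Algebra.TensorProduct.tmul_mul_tmul,
        LinearMap.mul'_apply, W.S_antimul, mul_assoc]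
    | add x y hx hy =>
      simp only [TensorProduct.tmul_add, TensorProduct.add_tmul, map_add, mul_add, add_mul, hx, hy]
  | add x y hx hy =>
    simp only [TensorProduct.tmul_add, TensorProduct.add_tmul, map_add, mul_add, add_mul, hx, hy]

lemma aux_K2 :
    TensorProduct.map (auxSwl W) LinearMap.id (W.Δ 1)
      = TensorProduct.map W.S LinearMap.id (W.Δ 1) := by
  have h1 : TensorProduct.map (auxSwl W) LinearMap.id (W.Δ 1)
      = (TensorProduct.map (LinearMap.mul' ℂ A ∘ₗ TensorProduct.map LinearMap.id W.S)
          LinearMap.id) ((TensorProduct.map W.Δ LinearMap.id) (W.Δ 1)) := by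
    rw [aux_map_map]; rfl
  rw [h1, ← W.unit_weak', aux_evalK2, aux_swIdS_one, ← Algebra.TensorProduct.one_def, one_mul]

lemma aux_swIdS_Sinv (b : A) (hb : b ∈ W.AL) : W.swIdS (W.Sinv b) = b := by
  obtain ⟨φ, hφ⟩ := hb
  have hSid : W.S ∘ₗ LinearMap.id = LinearMap.id ∘ₗ W.S := by
    rw [LinearMap.comp_id, LinearMap.id_comp]
  have h1 : W.Sinv b = (TensorProduct.lid ℂ A) ((TensorProduct.map φ LinearMap.id)
      (TensorProduct.comm ℂ A A (TensorProduct.map LinearMap.id W.S (W.Δ 1)))) := by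
    rw [hφ, aux_lid_nat, aux_id_Sinv_e]
  have h2 : W.swIdS (W.Sinv b) = (TensorProduct.lid ℂ A) ((TensorProduct.map φ LinearMap.id)
      ((TensorProduct.map LinearMap.id (auxSwl W))
        (TensorProduct.comm ℂ A A (TensorProduct.map LinearMap.id W.S (W.Δ 1))))) := by
    rw [← auxSwl_apply, h1, aux_lid_nat]
  have h3 : (TensorProduct.map LinearMap.id (auxSwl W))
      (TensorProduct.comm ℂ A A (TensorProduct.map LinearMap.id W.S (W.Δ 1))) = W.Δ 1 := by
    rw [aux_map_comm, aux_map_map, LinearMap.comp_id, LinearMap.id_comp]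
    have h4 : TensorProduct.map (auxSwl W) W.S (W.Δ 1)
        = TensorProduct.map LinearMap.id W.S (TensorProduct.map (auxSwl W) LinearMap.id (W.Δ 1)) := by
      rw [aux_map_map, LinearMap.id_comp, LinearMap.comp_id]
    rw [h4, aux_K2, aux_map_map, LinearMap.id_comp, LinearMap.comp_id, ← aux_comm_e,
      aux_comm_comm]
  rw [h2, h3, ← hφ]

/-- The conjugate functional `x ↦ conj (φ (star x))`. -/
def auxConj (φ : A →ₗ[ℂ] ℂ) : A →ₗ[ℂ] ℂ where
  toFun x := starRingEnd ℂ (φ (star x))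
  map_add' x y := by simp [star_add, map_add]
  map_smul' c x := by simp [star_smul, map_smul, mul_comm]

lemma aux_tensorStar_tmul (a b : A) :
    tensorStar A A (a ⊗ₜ[ℂ] b) = star a ⊗ₜ[ℂ] star b := rfl

lemma aux_star_lid (φ : A →ₗ[ℂ] ℂ) (t : A ⊗[ℂ] A) :
    star ((TensorProduct.lid ℂ A) ((TensorProduct.map φ LinearMap.id) t))
      = (TensorProduct.lid ℂ A)
          ((TensorProduct.map (auxConj φ) LinearMap.id) (tensorStar A A t)) := by
  induction t using TensorProduct.induction_on with
  | zero => simp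
  | tmul a b =>
    rw [aux_tensorStar_tmul]
    simp [auxConj, star_smul]
  | add x y hx hy => simp [map_add, star_add, hx, hy]

lemma aux_star_AL (a : A) (ha : a ∈ W.AL) : star a ∈ W.AL := by
  obtain ⟨φ, hφ⟩ := ha
  refine ⟨auxConj φ, ?_⟩
  have he : tensorStar A A (W.Δ 1) = W.Δ 1 := by
    have h := W.Δ_star 1
    rw [star_one] at h
    exact h.symm
  rw [hφ, aux_star_lid, he]

lemma aux_swIdS_mem (a : A) : W.swIdS a ∈ W.AL :=
  ⟨W.ε ∘ₗ LinearMap.mulRight ℂ a, W.antipode_right a⟩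

lemma aux_evalL1 (φ : A →ₗ[ℂ] ℂ) (u v : A ⊗[ℂ] A) :
    (TensorProduct.lid ℂ (A ⊗[ℂ] A)) ((TensorProduct.map φ LinearMap.id)
      ((TensorProduct.assoc ℂ A A A)
        ((TensorProduct.assoc ℂ A A A).symm ((1 : A) ⊗ₜ[ℂ] u) * (v ⊗ₜ[ℂ] (1 : A)))))
    = u * (((TensorProduct.lid ℂ A) ((TensorProduct.map φ LinearMap.id) v)) ⊗ₜ[ℂ] (1 : A)) := by
  induction u using TensorProduct.induction_on with
  | zero => simp
  | tmul a b =>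
    induction v using TensorProduct.induction_on with
    | zero => simp
    | tmul c d =>
      simp [TensorProduct.assoc_symm_tmul, TensorProduct.assoc_tmul,
        Algebra.TensorProduct.tmul_mul_tmul, TensorProduct.smul_tmul', mul_smul_comm]
    | add x y hx hy =>
      simp only [TensorProduct.tmul_add, TensorProduct.add_tmul, map_add, mul_add, add_mul, hx, hy]
  | add x y hx hy =>
    simp only [TensorProduct.tmul_add, TensorProduct.add_tmul, map_add, mul_add, add_mul, hx, hy]

lemma aux_L1 (x : A) (hx : x ∈ W.AL) :
    W.Δ x = W.Δ 1 * (x ⊗ₜ[ℂ] (1 : A)) := by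
  obtain ⟨φ, hφ⟩ := hx
  have hP : ∀ t : A ⊗[ℂ] A,
      W.Δ ((TensorProduct.lid ℂ A) ((TensorProduct.map φ LinearMap.id) t))
        = (TensorProduct.lid ℂ (A ⊗[ℂ] A)) ((TensorProduct.map φ LinearMap.id)
            ((TensorProduct.map LinearMap.id W.Δ) t)) := by
    intro t
    induction t using TensorProduct.induction_on with
    | zero => simp
    | tmul a b => simp
    | add s r hs hr => simp [map_add, hs, hr]
  conv_lhs => rw [hφ, hP, ← W.coassoc 1, ← W.unit_weak']
  rw [aux_evalL1, ← hφ]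

lemma aux_L0 (MA : ModuleAlgebra W M) (p m : M) :
    LinearMap.mul' ℂ M
      ((TensorProduct.map (MA.act.flip p) (MA.act.flip m)) (W.Δ 1)) = p * m := by
  rw [← MA.act_mul' 1 p m, MA.act_one]

lemma aux_evalL2 (MA : ModuleAlgebra W M) (x : A) (m : M) (u : A ⊗[ℂ] A) :
    LinearMap.mul' ℂ M ((TensorProduct.map (MA.act.flip 1) (MA.act.flip m))
        (u * (x ⊗ₜ[ℂ] (1 : A))))
      = LinearMap.mul' ℂ M
          ((TensorProduct.map (MA.act.flip (MA.act x 1)) (MA.act.flip m)) u) := by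
  induction u using TensorProduct.induction_on with
  | zero => simp
  | tmul a b =>
    simp [Algebra.TensorProduct.tmul_mul_tmul, LinearMap.mul'_apply, LinearMap.flip_apply,
      MA.act_mul]
  | add s r hs hr =>
    simp only [add_mul, map_add, hs, hr]

lemma aux_L2 (MA : ModuleAlgebra W M) (x : A) (hx : x ∈ W.AL) (m : M) :
    MA.act x m = MA.act x 1 * m := by
  conv_lhs => rw [← one_mul m]
  rw [MA.act_mul', aux_L1 W x hx, aux_evalL2, aux_L0]

end AuxNSW


/-- Proposition 2.10 of [NSW]: `A ▷ 1_M = A_L ▷ 1_M`, and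
`μ_▷ : A_L → M_R`, `a ↦ a ▷ 1_M`, is a unital star-preserving algebra
homomorphism onto `M_R`. -/
theorem mu_act_homomorphism
    {A M : Type} [Ring A] [Algebra ℂ A] [StarRing A] [StarModule ℂ A]
    [Ring M] [Algebra ℂ M] [StarRing M] [StarModule ℂ M]
    (W : WeakHopfAlgebra A) (MA : ModuleAlgebra W M) :
    MA.MR = (fun a : A => MA.act a 1) '' W.AL
    ∧ MA.act (1 : A) (1 : M) = 1
    ∧ (∀ a ∈ W.AL, ∀ b ∈ W.AL, MA.act (a * b) 1 = MA.act a 1 * MA.act b 1)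
    ∧ (∀ a ∈ W.AL, MA.act (star a) 1 = star (MA.act a 1)) := by
  refine ⟨?_, MA.act_one 1, ?_, ?_⟩
  · ext m
    constructor
    · rintro ⟨a, rfl⟩
      exact ⟨W.swIdS a, aux_swIdS_mem W a, (MA.act_unit a).symm⟩
    · rintro ⟨x, -, rfl⟩
      exact ⟨x, rfl⟩
  · intro a ha b hb
    rw [MA.act_mul a b 1]
    exact aux_L2 W MA a ha (MA.act b 1)
  · intro a ha
    have hb : star a ∈ W.AL := aux_star_AL W a ha
    have h2 : star (W.S a) = W.Sinv (star a) := by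
      have h := W.S_star (star a)
      rwa [star_star] at h
    rw [MA.act_star a 1, star_one, h2, MA.act_unit (W.Sinv (star a)),
      aux_swIdS_Sinv W (star a) hb]
end
end

section
/- Let M be an A-module algebra over a weak *-Hopf algebra A. For n ∈ M the following four conditions are equivalent: (i) a▷(m·n) = (a▷m)·n for all a ∈ A and m ∈ M; (ii) a▷n = Σ(a₍₁₎·S(a₍₂₎))▷n for all a ∈ A; (iii) a▷(n·m) = n·(a▷m) for all a ∈ A and m ∈ M; (iv) a▷n = Σ(a₍₂₎·S⁻¹(a₍₁₎))▷n for all a ∈ A. -/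
open scoped TensorProduct

noncomputable section

section Aux

open TensorProduct

variable {A : Type} [Ring A] [Algebra ℂ A] [StarRing A] [StarModule ℂ A]
variable {M : Type} [Ring M] [Algebra ℂ M] [StarRing M] [StarModule ℂ M]
variable (W : WeakHopfAlgebra A)

set_option maxHeartbeats 1000000
set_option synthInstance.maxHeartbeats 400000

namespace WHAux

/-- `x ↦ Σ x₁ S(x₂)` as a linear map. -/
def swIdSL : A →ₗ[ℂ] A :=
  LinearMap.mul' ℂ A ∘ₗ TensorProduct.map LinearMap.id W.S ∘ₗ W.Δ

lemma swIdSL_apply (x : A) : swIdSL W x = W.swIdS x := rfl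

/-- `x ↦ Σ S(x₁) x₂` as a linear map. -/
def swSIdL : A →ₗ[ℂ] A :=
  LinearMap.mul' ℂ A ∘ₗ TensorProduct.map W.S LinearMap.id ∘ₗ W.Δ

lemma swSIdL_apply (x : A) : swSIdL W x = W.swSId x := rfl

/-- `x ↦ Σ S⁻¹(x₂) x₁` as a linear map. -/
def swSinvIdL : A →ₗ[ℂ] A :=
  LinearMap.mul' ℂ A ∘ₗ TensorProduct.map W.Sinv LinearMap.id ∘ₗ
    (TensorProduct.comm ℂ A A).toLinearMap ∘ₗ W.Δ

lemma swSinvIdL_apply (x : A) : swSinvIdL W x = W.swSinvId x := rfl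

/-- `x ↦ Σ x₂ S⁻¹(x₁)` as a linear map. -/
def swIdSinvL : A →ₗ[ℂ] A :=
  LinearMap.mul' ℂ A ∘ₗ TensorProduct.map LinearMap.id W.Sinv ∘ₗ
    (TensorProduct.comm ℂ A A).toLinearMap ∘ₗ W.Δ

lemma swIdSinvL_apply (x : A) : swIdSinvL W x = W.swIdSinv x := rfl

/-- Contraction `(x ⊗ y) ⊗ z ↦ ε(y) • x ⊗ z`. -/
def Θ : (A ⊗[ℂ] A) ⊗[ℂ] A →ₗ[ℂ] A ⊗[ℂ] A :=
  TensorProduct.map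
    ((TensorProduct.rid ℂ A).toLinearMap ∘ₗ TensorProduct.map LinearMap.id W.ε)
    LinearMap.id

lemma Θ_mapDelta (w : A ⊗[ℂ] A) :
    Θ W ((TensorProduct.map W.Δ LinearMap.id) w) = w := by
  induction w using TensorProduct.induction_on with
  | zero => simp
  | tmul x z =>
      simp only [TensorProduct.map_tmul, Θ, LinearMap.id_coe, id_eq, LinearMap.coe_comp,
        Function.comp_apply, LinearEquiv.coe_coe]
      rw [W.counit_right]
  | add u v hu hv => simp only [map_add, hu, hv]

lemma tensorStar_tmul (a b : A) :
    tensorStar A A (a ⊗ₜ[ℂ] b) = star a ⊗ₜ[ℂ] star b := rfl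

lemma mapDelta_mul (u v : A ⊗[ℂ] A) :
    (TensorProduct.map W.Δ (LinearMap.id : A →ₗ[ℂ] A)) (u * v)
      = (TensorProduct.map W.Δ LinearMap.id) u * (TensorProduct.map W.Δ LinearMap.id) v := by
  induction u using TensorProduct.induction_on with
  | zero => simp
  | tmul x y =>
      induction v using TensorProduct.induction_on with
      | zero => simp
      | tmul x' y' =>
          simp only [Algebra.TensorProduct.tmul_mul_tmul, TensorProduct.map_tmul,
            LinearMap.id_coe, id_eq, W.Δ_mul]
      | add v1 v2 h1 h2 => simp only [mul_add, map_add, h1, h2]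
  | add u1 u2 h1 h2 => simp only [add_mul, map_add, h1, h2]

lemma Sinv_antimul (x y : A) : W.Sinv (x * y) = W.Sinv y * W.Sinv x := by
  have h := W.S_antimul (W.Sinv y) (W.Sinv x)
  rw [W.S_Sinv, W.S_Sinv] at h
  have h2 := congrArg W.Sinv h
  rw [W.Sinv_S] at h2
  exact h2.symm

lemma swSId_one : W.swSId 1 = 1 := by
  have h := W.antipode_left 1
  rw [LinearMap.mulLeft_one, LinearMap.comp_id] at h
  rw [WeakHopfAlgebra.swSId, h, W.counit_right]

lemma swIdS_one : W.swIdS 1 = 1 := by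
  have h := W.antipode_right 1
  rw [LinearMap.mulRight_one, LinearMap.comp_id] at h
  rw [WeakHopfAlgebra.swIdS, h, W.counit_left]

lemma swSId_expand {s : Finset (A × A)} (hs : W.Δ 1 = ∑ p ∈ s, p.1 ⊗ₜ[ℂ] p.2) (x : A) :
    W.swSId x = ∑ p ∈ s, W.ε (x * p.2) • p.1 := by
  have h := W.antipode_left x
  rw [hs] at h
  rw [WeakHopfAlgebra.swSId]
  simpa only [TensorProduct.tmul_sum, TensorProduct.sum_tmul, map_sum,
    TensorProduct.map_tmul, TensorProduct.assoc_symm_tmul, TensorProduct.assoc_tmul,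
    TensorProduct.lid_tmul, TensorProduct.rid_tmul, TensorProduct.comm_tmul,
    LinearMap.mul'_apply, LinearMap.id_coe, id_eq, LinearMap.coe_comp,
    Function.comp_apply, LinearEquiv.coe_coe, Finset.sum_mul_sum,
    Algebra.TensorProduct.tmul_mul_tmul, TensorProduct.smul_tmul',
    Finset.smul_sum, one_mul, mul_one, LinearMap.mulLeft_apply, LinearMap.mulRight_apply] using h

lemma swIdS_expand {s : Finset (A × A)} (hs : W.Δ 1 = ∑ p ∈ s, p.1 ⊗ₜ[ℂ] p.2) (x : A) :
    W.swIdS x = ∑ p ∈ s, W.ε (p.1 * x) • p.2 := by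
  have h := W.antipode_right x
  rw [hs] at h
  rw [WeakHopfAlgebra.swIdS]
  simpa only [TensorProduct.tmul_sum, TensorProduct.sum_tmul, map_sum,
    TensorProduct.map_tmul, TensorProduct.assoc_symm_tmul, TensorProduct.assoc_tmul,
    TensorProduct.lid_tmul, TensorProduct.rid_tmul, TensorProduct.comm_tmul,
    LinearMap.mul'_apply, LinearMap.id_coe, id_eq, LinearMap.coe_comp,
    Function.comp_apply, LinearEquiv.coe_coe, Finset.sum_mul_sum,
    Algebra.TensorProduct.tmul_mul_tmul, TensorProduct.smul_tmul',
    Finset.smul_sum, one_mul, mul_one, LinearMap.mulLeft_apply, LinearMap.mulRight_apply] using h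

lemma I8 : (TensorProduct.map (swSIdL W) LinearMap.id) (W.Δ 1) = W.Δ 1 := by
  obtain ⟨s, hs⟩ := TensorProduct.exists_finset (W.Δ 1)
  have h3 := congrArg (Θ W) W.unit_weak'
  rw [Θ_mapDelta] at h3
  have h4 : Θ W ((TensorProduct.assoc ℂ A A A).symm ((1 : A) ⊗ₜ[ℂ] W.Δ 1) * (W.Δ 1 ⊗ₜ[ℂ] (1 : A)))
      = ∑ p' ∈ s, ∑ p ∈ s, W.ε (p'.1 * p.2) • (p.1 ⊗ₜ[ℂ] p'.2) := by
    rw [hs]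
    simp only [Θ, TensorProduct.tmul_sum, TensorProduct.sum_tmul, map_sum,
    TensorProduct.map_tmul, TensorProduct.assoc_symm_tmul, TensorProduct.assoc_tmul,
    TensorProduct.lid_tmul, TensorProduct.rid_tmul, TensorProduct.comm_tmul,
    LinearMap.mul'_apply, LinearMap.id_coe, id_eq, LinearMap.coe_comp,
    Function.comp_apply, LinearEquiv.coe_coe, Finset.sum_mul_sum,
    Algebra.TensorProduct.tmul_mul_tmul, TensorProduct.smul_tmul',
    Finset.smul_sum, one_mul, mul_one, LinearMap.mulLeft_apply, LinearMap.mulRight_apply]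
  rw [h4] at h3
  conv_lhs => rw [hs]
  simp only [map_sum, TensorProduct.map_tmul, LinearMap.id_coe, id_eq, swSIdL_apply,
    swSId_expand W hs, TensorProduct.sum_tmul, TensorProduct.smul_tmul']
  simpa only [TensorProduct.smul_tmul'] using h3

lemma S_one : W.S 1 = 1 := by
  obtain ⟨s, hs⟩ := TensorProduct.exists_finset (W.Δ 1)
  have h := W.antipode_mid 1
  rw [hs] at h
  simp only [TensorProduct.tmul_sum, TensorProduct.sum_tmul, map_sum,
    TensorProduct.map_tmul, TensorProduct.assoc_symm_tmul, TensorProduct.assoc_tmul,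
    TensorProduct.lid_tmul, TensorProduct.rid_tmul, TensorProduct.comm_tmul,
    LinearMap.mul'_apply, LinearMap.id_coe, id_eq, LinearMap.coe_comp,
    Function.comp_apply, LinearEquiv.coe_coe, Finset.sum_mul_sum,
    Algebra.TensorProduct.tmul_mul_tmul, TensorProduct.smul_tmul',
    Finset.smul_sum, one_mul, mul_one, LinearMap.mulLeft_apply, LinearMap.mulRight_apply] at h
  -- h : ∑ p ∈ s, mul' (map S id (Δ p.1)) * S p.2 = S 1
  have h4 := congrArg (fun z => LinearMap.mul' ℂ A
      ((TensorProduct.map (LinearMap.id : A →ₗ[ℂ] A) W.S) z)) (I8 W)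
  rw [hs] at h4
  simp only [TensorProduct.tmul_sum, TensorProduct.sum_tmul, map_sum,
    TensorProduct.map_tmul, TensorProduct.assoc_symm_tmul, TensorProduct.assoc_tmul,
    TensorProduct.lid_tmul, TensorProduct.rid_tmul, TensorProduct.comm_tmul,
    LinearMap.mul'_apply, LinearMap.id_coe, id_eq, LinearMap.coe_comp,
    Function.comp_apply, LinearEquiv.coe_coe, Finset.sum_mul_sum,
    Algebra.TensorProduct.tmul_mul_tmul, TensorProduct.smul_tmul',
    Finset.smul_sum, one_mul, mul_one, LinearMap.mulLeft_apply, LinearMap.mulRight_apply, swSIdL] at h4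
  -- h4 : ∑ p ∈ s, (mul' (map S id (Δ p.1))) * S p.2 = ∑ p ∈ s, p.1 * S p.2
  rw [← h, h4]
  have h5 : W.swIdS 1 = ∑ p ∈ s, p.1 * W.S p.2 := by
    rw [WeakHopfAlgebra.swIdS, hs]
    simp only [TensorProduct.tmul_sum, TensorProduct.sum_tmul, map_sum,
    TensorProduct.map_tmul, TensorProduct.assoc_symm_tmul, TensorProduct.assoc_tmul,
    TensorProduct.lid_tmul, TensorProduct.rid_tmul, TensorProduct.comm_tmul,
    LinearMap.mul'_apply, LinearMap.id_coe, id_eq, LinearMap.coe_comp,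
    Function.comp_apply, LinearEquiv.coe_coe, Finset.sum_mul_sum,
    Algebra.TensorProduct.tmul_mul_tmul, TensorProduct.smul_tmul',
    Finset.smul_sum, one_mul, mul_one, LinearMap.mulLeft_apply, LinearMap.mulRight_apply]
  rw [← h5, swIdS_one]

lemma Sinv_one : W.Sinv 1 = 1 := by
  have h := W.Sinv_S 1
  rwa [S_one] at h

lemma swSinvId_one : W.swSinvId 1 = 1 := by
  obtain ⟨s, hs⟩ := TensorProduct.exists_finset (W.Δ 1)
  have h1 : W.swSId 1 = ∑ p ∈ s, W.S p.1 * p.2 := by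
    rw [WeakHopfAlgebra.swSId, hs]
    simp only [TensorProduct.tmul_sum, TensorProduct.sum_tmul, map_sum,
    TensorProduct.map_tmul, TensorProduct.assoc_symm_tmul, TensorProduct.assoc_tmul,
    TensorProduct.lid_tmul, TensorProduct.rid_tmul, TensorProduct.comm_tmul,
    LinearMap.mul'_apply, LinearMap.id_coe, id_eq, LinearMap.coe_comp,
    Function.comp_apply, LinearEquiv.coe_coe, Finset.sum_mul_sum,
    Algebra.TensorProduct.tmul_mul_tmul, TensorProduct.smul_tmul',
    Finset.smul_sum, one_mul, mul_one, LinearMap.mulLeft_apply, LinearMap.mulRight_apply]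
  have h2 : W.swSinvId 1 = ∑ p ∈ s, W.Sinv p.2 * p.1 := by
    rw [WeakHopfAlgebra.swSinvId, hs]
    simp only [TensorProduct.tmul_sum, TensorProduct.sum_tmul, map_sum,
    TensorProduct.map_tmul, TensorProduct.assoc_symm_tmul, TensorProduct.assoc_tmul,
    TensorProduct.lid_tmul, TensorProduct.rid_tmul, TensorProduct.comm_tmul,
    LinearMap.mul'_apply, LinearMap.id_coe, id_eq, LinearMap.coe_comp,
    Function.comp_apply, LinearEquiv.coe_coe, Finset.sum_mul_sum,
    Algebra.TensorProduct.tmul_mul_tmul, TensorProduct.smul_tmul',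
    Finset.smul_sum, one_mul, mul_one, LinearMap.mulLeft_apply, LinearMap.mulRight_apply]
  have h3 : ∀ p ∈ s, W.Sinv p.2 * p.1 = W.Sinv (W.S p.1 * p.2) := by
    intro p _
    rw [Sinv_antimul, W.Sinv_S]
  rw [h2, Finset.sum_congr rfl h3, ← map_sum, ← h1, swSId_one, Sinv_one]

lemma I1 (a : A) :
    (TensorProduct.map LinearMap.id (swIdSL W)) (W.Δ a) = W.Δ 1 * (a ⊗ₜ[ℂ] 1) := by
  obtain ⟨s, hs⟩ := TensorProduct.exists_finset (W.Δ 1)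
  obtain ⟨t, ht⟩ := TensorProduct.exists_finset (W.Δ a)
  have hkey : (TensorProduct.map W.Δ LinearMap.id) (W.Δ 1 * (a ⊗ₜ[ℂ] 1))
      = (TensorProduct.assoc ℂ A A A).symm ((1 : A) ⊗ₜ[ℂ] W.Δ 1) * (W.Δ a ⊗ₜ[ℂ] (1 : A)) := by
    rw [mapDelta_mul, ← W.unit_weak', mul_assoc]
    congr 1
    simp only [TensorProduct.map_tmul, LinearMap.id_coe, id_eq,
      Algebra.TensorProduct.tmul_mul_tmul, mul_one]
    rw [← W.Δ_mul, one_mul]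
  have h5 := congrArg (Θ W) hkey
  rw [Θ_mapDelta] at h5
  have h6 : Θ W ((TensorProduct.assoc ℂ A A A).symm ((1 : A) ⊗ₜ[ℂ] W.Δ 1) * (W.Δ a ⊗ₜ[ℂ] (1 : A)))
      = ∑ p ∈ s, ∑ q ∈ t, W.ε (p.1 * q.2) • (q.1 ⊗ₜ[ℂ] p.2) := by
    rw [hs, ht]
    simp only [Θ, TensorProduct.tmul_sum, TensorProduct.sum_tmul, map_sum,
    TensorProduct.map_tmul, TensorProduct.assoc_symm_tmul, TensorProduct.assoc_tmul,
    TensorProduct.lid_tmul, TensorProduct.rid_tmul, TensorProduct.comm_tmul,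
    LinearMap.mul'_apply, LinearMap.id_coe, id_eq, LinearMap.coe_comp,
    Function.comp_apply, LinearEquiv.coe_coe, Finset.sum_mul_sum,
    Algebra.TensorProduct.tmul_mul_tmul, TensorProduct.smul_tmul',
    Finset.smul_sum, one_mul, mul_one, LinearMap.mulLeft_apply, LinearMap.mulRight_apply]
  rw [h6] at h5
  conv_lhs => rw [ht]
  simp only [map_sum, TensorProduct.map_tmul, LinearMap.id_coe, id_eq, swIdSL_apply,
    swIdS_expand W hs, TensorProduct.tmul_sum, TensorProduct.tmul_smul]
  rw [Finset.sum_comm, ← h5]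

lemma I9 : (TensorProduct.map LinearMap.id (swSinvIdL W)) (W.Δ 1) = W.Δ 1 := by
  obtain ⟨s, hs⟩ := TensorProduct.exists_finset (W.Δ 1)
  have h1 := W.coassoc 1
  rw [← W.unit_weak'] at h1
  have h3 : (TensorProduct.map (LinearMap.id : A →ₗ[ℂ] A) W.Δ) (W.Δ 1)
      = ∑ p' ∈ s, ∑ p ∈ s, p.1 ⊗ₜ[ℂ] ((p'.1 * p.2) ⊗ₜ[ℂ] p'.2) := by
    rw [← h1, hs]
    simp only [TensorProduct.tmul_sum, TensorProduct.sum_tmul, map_sum,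
    TensorProduct.map_tmul, TensorProduct.assoc_symm_tmul, TensorProduct.assoc_tmul,
    TensorProduct.lid_tmul, TensorProduct.rid_tmul, TensorProduct.comm_tmul,
    LinearMap.mul'_apply, LinearMap.id_coe, id_eq, LinearMap.coe_comp,
    Function.comp_apply, LinearEquiv.coe_coe, Finset.sum_mul_sum,
    Algebra.TensorProduct.tmul_mul_tmul, TensorProduct.smul_tmul',
    Finset.smul_sum, one_mul, mul_one, LinearMap.mulLeft_apply, LinearMap.mulRight_apply]
  set K : A ⊗[ℂ] A →ₗ[ℂ] A :=
    LinearMap.mul' ℂ A ∘ₗ TensorProduct.map W.Sinv LinearMap.id ∘ₗ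
      (TensorProduct.comm ℂ A A).toLinearMap with hK
  have h4 := congrArg (TensorProduct.map (LinearMap.id : A →ₗ[ℂ] A) K) h3
  have hL : (TensorProduct.map (LinearMap.id : A →ₗ[ℂ] A) K)
      ((TensorProduct.map (LinearMap.id : A →ₗ[ℂ] A) W.Δ) (W.Δ 1))
      = (TensorProduct.map LinearMap.id (swSinvIdL W)) (W.Δ 1) := by
    rw [hs]
    simp only [hK, swSinvIdL, TensorProduct.tmul_sum, TensorProduct.sum_tmul, map_sum,
    TensorProduct.map_tmul, TensorProduct.assoc_symm_tmul, TensorProduct.assoc_tmul,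
    TensorProduct.lid_tmul, TensorProduct.rid_tmul, TensorProduct.comm_tmul,
    LinearMap.mul'_apply, LinearMap.id_coe, id_eq, LinearMap.coe_comp,
    Function.comp_apply, LinearEquiv.coe_coe, Finset.sum_mul_sum,
    Algebra.TensorProduct.tmul_mul_tmul, TensorProduct.smul_tmul',
    Finset.smul_sum, one_mul, mul_one, LinearMap.mulLeft_apply, LinearMap.mulRight_apply]
  have hw : ∑ p' ∈ s, W.Sinv p'.2 * p'.1 = 1 := by
    have h7 : W.swSinvId 1 = ∑ p' ∈ s, W.Sinv p'.2 * p'.1 := by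
      rw [WeakHopfAlgebra.swSinvId, hs]
      simp only [TensorProduct.tmul_sum, TensorProduct.sum_tmul, map_sum,
    TensorProduct.map_tmul, TensorProduct.assoc_symm_tmul, TensorProduct.assoc_tmul,
    TensorProduct.lid_tmul, TensorProduct.rid_tmul, TensorProduct.comm_tmul,
    LinearMap.mul'_apply, LinearMap.id_coe, id_eq, LinearMap.coe_comp,
    Function.comp_apply, LinearEquiv.coe_coe, Finset.sum_mul_sum,
    Algebra.TensorProduct.tmul_mul_tmul, TensorProduct.smul_tmul',
    Finset.smul_sum, one_mul, mul_one, LinearMap.mulLeft_apply, LinearMap.mulRight_apply]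
    rw [← h7, swSinvId_one]
  rw [hL] at h4
  rw [h4]
  have hR : ∀ p' ∈ s, ∀ p ∈ s,
      (TensorProduct.map (LinearMap.id : A →ₗ[ℂ] A) K) (p.1 ⊗ₜ[ℂ] ((p'.1 * p.2) ⊗ₜ[ℂ] p'.2))
      = p.1 ⊗ₜ[ℂ] ((W.Sinv p'.2 * p'.1) * p.2) := by
    intro p' _ p _
    simp only [hK, TensorProduct.tmul_sum, TensorProduct.sum_tmul, map_sum,
    TensorProduct.map_tmul, TensorProduct.assoc_symm_tmul, TensorProduct.assoc_tmul,
    TensorProduct.lid_tmul, TensorProduct.rid_tmul, TensorProduct.comm_tmul,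
    LinearMap.mul'_apply, LinearMap.id_coe, id_eq, LinearMap.coe_comp,
    Function.comp_apply, LinearEquiv.coe_coe, Finset.sum_mul_sum,
    Algebra.TensorProduct.tmul_mul_tmul, TensorProduct.smul_tmul',
    Finset.smul_sum, one_mul, mul_one, LinearMap.mulLeft_apply, LinearMap.mulRight_apply, mul_assoc]
  calc (TensorProduct.map (LinearMap.id : A →ₗ[ℂ] A) K)
        (∑ p' ∈ s, ∑ p ∈ s, p.1 ⊗ₜ[ℂ] ((p'.1 * p.2) ⊗ₜ[ℂ] p'.2))
      = ∑ p' ∈ s, ∑ p ∈ s, p.1 ⊗ₜ[ℂ] ((W.Sinv p'.2 * p'.1) * p.2) := by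
        rw [map_sum]
        exact Finset.sum_congr rfl fun p' hp' => by
          rw [map_sum]
          exact Finset.sum_congr rfl fun p hp => hR p' hp' p hp
    _ = ∑ p ∈ s, ∑ p' ∈ s, p.1 ⊗ₜ[ℂ] ((W.Sinv p'.2 * p'.1) * p.2) := Finset.sum_comm
    _ = ∑ p ∈ s, p.1 ⊗ₜ[ℂ] ((∑ p' ∈ s, W.Sinv p'.2 * p'.1) * p.2) := by
        exact Finset.sum_congr rfl fun p hp => by
          rw [Finset.sum_mul, TensorProduct.tmul_sum]
    _ = W.Δ 1 := by
        rw [hw, hs]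
        simp only [one_mul]

lemma lemA (a : A) : W.swIdSinv a = W.Sinv (W.swIdS a) := by
  obtain ⟨t, ht⟩ := TensorProduct.exists_finset (W.Δ a)
  rw [WeakHopfAlgebra.swIdSinv, WeakHopfAlgebra.swIdS, ht]
  simp only [TensorProduct.tmul_sum, TensorProduct.sum_tmul, map_sum,
    TensorProduct.map_tmul, TensorProduct.assoc_symm_tmul, TensorProduct.assoc_tmul,
    TensorProduct.lid_tmul, TensorProduct.rid_tmul, TensorProduct.comm_tmul,
    LinearMap.mul'_apply, LinearMap.id_coe, id_eq, LinearMap.coe_comp,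
    Function.comp_apply, LinearEquiv.coe_coe, Finset.sum_mul_sum,
    Algebra.TensorProduct.tmul_mul_tmul, TensorProduct.smul_tmul',
    Finset.smul_sum, one_mul, mul_one, LinearMap.mulLeft_apply, LinearMap.mulRight_apply]
  refine Finset.sum_congr rfl fun q _ => ?_
  rw [Sinv_antimul, W.Sinv_S]

lemma lemB (z : A) : W.swIdS (W.Sinv z) = W.swSinvId z := by
  have h := W.S_anticomul (W.Sinv z)
  rw [W.S_Sinv] at h
  obtain ⟨u, hu⟩ := TensorProduct.exists_finset (W.Δ (W.Sinv z))
  rw [hu] at h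
  simp only [map_sum, TensorProduct.map_tmul, TensorProduct.comm_tmul,
    LinearEquiv.coe_coe] at h
  rw [WeakHopfAlgebra.swIdS, WeakHopfAlgebra.swSinvId, hu, h]
  simp only [TensorProduct.tmul_sum, TensorProduct.sum_tmul, map_sum,
    TensorProduct.map_tmul, TensorProduct.assoc_symm_tmul, TensorProduct.assoc_tmul,
    TensorProduct.lid_tmul, TensorProduct.rid_tmul, TensorProduct.comm_tmul,
    LinearMap.mul'_apply, LinearMap.id_coe, id_eq, LinearMap.coe_comp,
    Function.comp_apply, LinearEquiv.coe_coe, Finset.sum_mul_sum,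
    Algebra.TensorProduct.tmul_mul_tmul, TensorProduct.smul_tmul',
    Finset.smul_sum, one_mul, mul_one, LinearMap.mulLeft_apply, LinearMap.mulRight_apply, W.Sinv_S]

lemma I3 (a : A) : W.swIdS (W.swIdSinv a) = W.swIdS a := by
  obtain ⟨s, hs⟩ := TensorProduct.exists_finset (W.Δ 1)
  rw [lemA, lemB]
  have h9 : ∑ p ∈ s, p.1 ⊗ₜ[ℂ] W.swSinvId p.2 = ∑ p ∈ s, p.1 ⊗ₜ[ℂ] p.2 := by
    have h := I9 W
    rw [hs] at h
    simpa only [map_sum, TensorProduct.map_tmul, LinearMap.id_coe, id_eq,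
      swSinvIdL_apply] using h
  have h10 := congrArg (fun x => (TensorProduct.lid ℂ A)
      ((TensorProduct.map (W.ε ∘ₗ LinearMap.mulRight ℂ a) (LinearMap.id : A →ₗ[ℂ] A)) x)) h9
  simp only [TensorProduct.tmul_sum, TensorProduct.sum_tmul, map_sum,
    TensorProduct.map_tmul, TensorProduct.assoc_symm_tmul, TensorProduct.assoc_tmul,
    TensorProduct.lid_tmul, TensorProduct.rid_tmul, TensorProduct.comm_tmul,
    LinearMap.mul'_apply, LinearMap.id_coe, id_eq, LinearMap.coe_comp,
    Function.comp_apply, LinearEquiv.coe_coe, Finset.sum_mul_sum,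
    Algebra.TensorProduct.tmul_mul_tmul, TensorProduct.smul_tmul',
    Finset.smul_sum, one_mul, mul_one, LinearMap.mulLeft_apply, LinearMap.mulRight_apply] at h10
  have hsw : W.swSinvId (W.swIdS a) = ∑ p ∈ s, W.ε (p.1 * a) • W.swSinvId p.2 := by
    rw [swIdS_expand W hs a, ← swSinvIdL_apply, map_sum]
    simp only [map_smul, swSinvIdL_apply]
  rw [hsw, swIdS_expand W hs a]
  exact h10

lemma I10 (a : A) : W.S (W.swIdS a) = W.swSId (W.S a) := by
  obtain ⟨t, ht⟩ := TensorProduct.exists_finset (W.Δ a)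
  have hΔS : W.Δ (W.S a) = ∑ q ∈ t, W.S q.2 ⊗ₜ[ℂ] W.S q.1 := by
    rw [W.S_anticomul, ht]
    simp only [map_sum, TensorProduct.map_tmul, TensorProduct.comm_tmul, LinearEquiv.coe_coe]
  rw [WeakHopfAlgebra.swIdS, WeakHopfAlgebra.swSId, ht, hΔS]
  simp only [TensorProduct.tmul_sum, TensorProduct.sum_tmul, map_sum,
    TensorProduct.map_tmul, TensorProduct.assoc_symm_tmul, TensorProduct.assoc_tmul,
    TensorProduct.lid_tmul, TensorProduct.rid_tmul, TensorProduct.comm_tmul,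
    LinearMap.mul'_apply, LinearMap.id_coe, id_eq, LinearMap.coe_comp,
    Function.comp_apply, LinearEquiv.coe_coe, Finset.sum_mul_sum,
    Algebra.TensorProduct.tmul_mul_tmul, TensorProduct.smul_tmul',
    Finset.smul_sum, one_mul, mul_one, LinearMap.mulLeft_apply, LinearMap.mulRight_apply]
  exact Finset.sum_congr rfl fun q _ => W.S_antimul q.1 (W.S q.2)

lemma SD2 (b : A) : star (W.swSId (star b)) = W.swIdSinv b := by
  obtain ⟨t, ht⟩ := TensorProduct.exists_finset (W.Δ b)
  have hΔ : W.Δ (star b) = ∑ q ∈ t, star q.1 ⊗ₜ[ℂ] star q.2 := by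
    rw [W.Δ_star, ht, map_sum]
    simp only [tensorStar_tmul]
  rw [WeakHopfAlgebra.swSId, WeakHopfAlgebra.swIdSinv, hΔ, ht]
  simp only [TensorProduct.tmul_sum, TensorProduct.sum_tmul, map_sum,
    TensorProduct.map_tmul, TensorProduct.assoc_symm_tmul, TensorProduct.assoc_tmul,
    TensorProduct.lid_tmul, TensorProduct.rid_tmul, TensorProduct.comm_tmul,
    LinearMap.mul'_apply, LinearMap.id_coe, id_eq, LinearMap.coe_comp,
    Function.comp_apply, LinearEquiv.coe_coe, Finset.sum_mul_sum,
    Algebra.TensorProduct.tmul_mul_tmul, TensorProduct.smul_tmul',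
    Finset.smul_sum, one_mul, mul_one, LinearMap.mulLeft_apply, LinearMap.mulRight_apply]
  rw [star_sum]
  exact Finset.sum_congr rfl fun q _ => by
    rw [star_mul, star_star, W.S_star]


section Mside

variable {W : WeakHopfAlgebra A} (MA : ModuleAlgebra W M)

lemma p1_to_p2 (n : M) (h : ∀ (a : A) (m : M), MA.act a (m * n) = MA.act a m * n) :
    ∀ a : A, MA.act a n = MA.act (W.swIdS a) n := by
  intro a
  have h1 : MA.act a n = MA.act a (1 * n) := by rw [one_mul]
  rw [h1, h, MA.act_unit, ← h, one_mul]

lemma p3_to_p2 (n : M) (h : ∀ (a : A) (m : M), MA.act a (n * m) = n * MA.act a m) :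
    ∀ a : A, MA.act a n = MA.act (W.swIdS a) n := by
  intro a
  have h1 : MA.act a n = MA.act a (n * 1) := by rw [mul_one]
  rw [h1, h, MA.act_unit, ← h, mul_one]

lemma p2_to_p1 (n : M) (h2 : ∀ a : A, MA.act a n = MA.act (W.swIdS a) n) :
    ∀ (a : A) (m : M), MA.act a (m * n) = MA.act a m * n := by
  intro a m
  obtain ⟨t, ht⟩ := TensorProduct.exists_finset (W.Δ a)
  obtain ⟨s, hs⟩ := TensorProduct.exists_finset (W.Δ 1)
  set β : A ⊗[ℂ] A →ₗ[ℂ] M :=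
    LinearMap.mul' ℂ M ∘ₗ TensorProduct.map (MA.act.flip m) (MA.act.flip n) with hβdef
  have hβ := congrArg β (I1 W a)
  have hβL : β ((TensorProduct.map LinearMap.id (swIdSL W)) (W.Δ a))
      = ∑ q ∈ t, MA.act q.1 m * MA.act (W.swIdS q.2) n := by
    rw [ht]
    simp only [hβdef, map_sum, TensorProduct.map_tmul, LinearMap.id_coe, id_eq,
      swIdSL_apply, LinearMap.coe_comp, Function.comp_apply, LinearMap.mul'_apply,
      LinearMap.flip_apply]
  have hβR : β (W.Δ 1 * (a ⊗ₜ[ℂ] 1)) = ∑ p ∈ s, MA.act (p.1 * a) m * MA.act p.2 n := by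
    rw [hs]
    simp only [hβdef, Finset.sum_mul, Algebra.TensorProduct.tmul_mul_tmul, mul_one,
      map_sum, TensorProduct.map_tmul, LinearMap.coe_comp, Function.comp_apply,
      LinearMap.mul'_apply, LinearMap.flip_apply]
  have hone : MA.act 1 (MA.act a m * n) = ∑ p ∈ s, MA.act p.1 (MA.act a m) * MA.act p.2 n := by
    rw [MA.act_mul', hs]
    simp only [map_sum, TensorProduct.map_tmul, LinearMap.mul'_apply, LinearMap.flip_apply]
  calc MA.act a (m * n)
      = ∑ q ∈ t, MA.act q.1 m * MA.act q.2 n := by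
        rw [MA.act_mul', ht]
        simp only [map_sum, TensorProduct.map_tmul, LinearMap.mul'_apply, LinearMap.flip_apply]
    _ = ∑ q ∈ t, MA.act q.1 m * MA.act (W.swIdS q.2) n :=
        Finset.sum_congr rfl fun q _ => by rw [← h2]
    _ = β (W.Δ 1 * (a ⊗ₜ[ℂ] 1)) := by rw [← hβL, hβ]
    _ = ∑ p ∈ s, MA.act (p.1 * a) m * MA.act p.2 n := hβR
    _ = ∑ p ∈ s, MA.act p.1 (MA.act a m) * MA.act p.2 n :=
        Finset.sum_congr rfl fun p _ => by rw [← MA.act_mul]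
    _ = MA.act 1 (MA.act a m * n) := hone.symm
    _ = MA.act a m * n := MA.act_one _

lemma p2_to_p4 (n : M) (h2 : ∀ a : A, MA.act a n = MA.act (W.swIdS a) n) :
    ∀ a : A, MA.act a n = MA.act (W.swIdSinv a) n := by
  intro a
  have h := h2 (W.swIdSinv a)
  rw [I3] at h
  rw [h2 a, h]

lemma p2_iff_p4_star (n : M) :
    (∀ a : A, MA.act a n = MA.act (W.swIdS a) n) ↔
    (∀ b : A, MA.act b (star n) = MA.act (W.swIdSinv b) (star n)) := by
  constructor
  · intro h2 b
    set a := W.Sinv (star b) with ha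
    have hb : star (W.S a) = b := by rw [ha, W.S_Sinv, star_star]
    have e1 : MA.act b (star n) = star (MA.act a n) := by rw [MA.act_star, hb]
    have e2 : star (MA.act (W.swIdS a) n) = MA.act (W.swIdSinv b) (star n) := by
      rw [MA.act_star, I10, ha, W.S_Sinv, SD2]
    rw [e1, h2 a, e2]
  · intro h4 a
    apply star_injective
    have hsd := SD2 W (star (W.S a))
    rw [star_star] at hsd
    calc star (MA.act a n)
        = MA.act (star (W.S a)) (star n) := MA.act_star a n
      _ = MA.act (W.swIdSinv (star (W.S a))) (star n) := h4 (star (W.S a))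
      _ = MA.act (star (W.swSId (W.S a))) (star n) := by rw [hsd]
      _ = MA.act (star (W.S (W.swIdS a))) (star n) := by rw [I10]
      _ = star (MA.act (W.swIdS a) n) := (MA.act_star _ _).symm

lemma p1_iff_p3_star (n : M) :
    (∀ (a : A) (m : M), MA.act a (m * n) = MA.act a m * n) ↔
    (∀ (b : A) (m : M), MA.act b (star n * m) = star n * MA.act b m) := by
  constructor
  · intro h b m
    set a := W.Sinv (star b) with ha
    have hb : star (W.S a) = b := by rw [ha, W.S_Sinv, star_star]
    have e0 : star n * m = star (star m * n) := by rw [star_mul, star_star]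
    calc MA.act b (star n * m)
        = MA.act (star (W.S a)) (star (star m * n)) := by rw [hb, e0]
      _ = star (MA.act a (star m * n)) := (MA.act_star _ _).symm
      _ = star (MA.act a (star m) * n) := by rw [h]
      _ = star n * star (MA.act a (star m)) := by rw [star_mul]
      _ = star n * MA.act (star (W.S a)) (star (star m)) := by rw [MA.act_star]
      _ = star n * MA.act b m := by rw [hb, star_star]
  · intro h a m
    apply star_injective
    calc star (MA.act a (m * n))
        = MA.act (star (W.S a)) (star n * star m) := by rw [MA.act_star, star_mul]
      _ = star n * MA.act (star (W.S a)) (star m) := h _ _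
      _ = star n * star (MA.act a m) := by rw [MA.act_star]
      _ = star (MA.act a m * n) := by rw [star_mul]

lemma p4_to_p3 (n : M) (h4 : ∀ a : A, MA.act a n = MA.act (W.swIdSinv a) n) :
    ∀ (a : A) (m : M), MA.act a (n * m) = n * MA.act a m := by
  have h2s : ∀ a : A, MA.act a (star n) = MA.act (W.swIdS a) (star n) := by
    apply (p2_iff_p4_star MA (star n)).mpr
    simpa only [star_star] using h4
  have h1s := p2_to_p1 MA (star n) h2s
  have h3 := (p1_iff_p3_star MA (star n)).mp h1s
  simpa only [star_star] using h3

end Mside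

end WHAux

end Aux

/-- Proposition 2.11 of [NSW]: for `n ∈ M` the four characterizations of
being a fixed point under the `A`-action are equivalent:
(i) `a ▷ (m·n) = (a ▷ m)·n`, (ii) `a ▷ n = Σ (a₍₁₎ S(a₍₂₎)) ▷ n`,
(iii) `a ▷ (n·m) = n·(a ▷ m)`, (iv) `a ▷ n = Σ (a₍₂₎ S⁻¹(a₍₁₎)) ▷ n`. -/
theorem fixed_point_conditions_equiv
    {A M : Type} [Ring A] [Algebra ℂ A] [StarRing A] [StarModule ℂ A]
    [Ring M] [Algebra ℂ M] [StarRing M] [StarModule ℂ M]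
    (W : WeakHopfAlgebra A) (MA : ModuleAlgebra W M) (n : M) :
    ((∀ (a : A) (m : M), MA.act a (m * n) = MA.act a m * n) ↔
      (∀ a : A, MA.act a n = MA.act (W.swIdS a) n))
    ∧ ((∀ a : A, MA.act a n = MA.act (W.swIdS a) n) ↔
      (∀ (a : A) (m : M), MA.act a (n * m) = n * MA.act a m))
    ∧ ((∀ (a : A) (m : M), MA.act a (n * m) = n * MA.act a m) ↔
      (∀ a : A, MA.act a n = MA.act (W.swIdSinv a) n)) :=
  ⟨⟨WHAux.p1_to_p2 MA n, WHAux.p2_to_p1 MA n⟩,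
    ⟨fun h2 => WHAux.p4_to_p3 MA n (WHAux.p2_to_p4 MA n h2), WHAux.p3_to_p2 MA n⟩,
    fun h3 => WHAux.p2_to_p4 MA n (WHAux.p3_to_p2 MA n h3), WHAux.p4_to_p3 MA n⟩
end
end
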